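/- arXiv:math/0602282 — 4 statements merged into one kernel-verified Lean document; each statement's English description precedes it below -/
import Mathlib

section
/- If G is a group in which the commutator subgroup equals the center, G' = Z(G), then any two central automorphisms of G commute. -/
open scoped commutatorElement

lemma commutator_central_perturb {G : Type*} [Group G] (a b u v : G)
    (hu : ∀ g : G, g * u = u * g) (hv : ∀ g : G, g * v = v * g) :
    ⁅a * u, b * v⁆ = ⁅a, b⁆ := by
  rw [commutatorElement_def, commutatorElement_def, mul_inv_rev, mul_inv_rev]
  calc a * u * (b * v) * (u⁻¹ * a⁻¹) * (v⁻¹ * b⁻¹)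
      = a * (u * b) * (v * u⁻¹ * a⁻¹ * v⁻¹ * b⁻¹) := by group
    _ = a * (b * u) * (v * u⁻¹ * a⁻¹ * v⁻¹ * b⁻¹) := by rw [hu b]
    _ = a * b * (u * v) * (u⁻¹ * a⁻¹ * v⁻¹ * b⁻¹) := by group
    _ = a * b * (v * u) * (u⁻¹ * a⁻¹ * v⁻¹ * b⁻¹) := by rw [hu v]
    _ = a * b * (v * a⁻¹) * (v⁻¹ * b⁻¹) := by group
    _ = a * b * (a⁻¹ * v) * (v⁻¹ * b⁻¹) := by rw [hv a⁻¹]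
    _ = a * b * a⁻¹ * b⁻¹ := by group

lemma central_fix (G : Type*) [Group G]
    (h : commutator G = Subgroup.center G) (φ : G ≃* G)
    (hφ : ∀ g : G, g⁻¹ * φ g ∈ Subgroup.center G) :
    ∀ z ∈ Subgroup.center G, φ z = z := by
  intro z hz
  rw [← h, commutator_eq_closure] at hz
  have : Set.EqOn φ.toMonoidHom (MonoidHom.id G) (Subgroup.closure (commutatorSet G)) := by
    apply MonoidHom.eqOn_closure
    rintro x ⟨a, b, rfl⟩
    have ha := Subgroup.mem_center_iff.mp (hφ a)
    have hb := Subgroup.mem_center_iff.mp (hφ b)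
    have ea : φ a = a * (a⁻¹ * φ a) := (mul_inv_cancel_left a (φ a)).symm
    have eb : φ b = b * (b⁻¹ * φ b) := (mul_inv_cancel_left b (φ b)).symm
    show φ ⁅a, b⁆ = ⁅a, b⁆
    rw [map_commutatorElement]
    calc ⁅φ a, φ b⁆ = ⁅a * (a⁻¹ * φ a), b * (b⁻¹ * φ b)⁆ := by rw [← ea, ← eb]
      _ = ⁅a, b⁆ := commutator_central_perturb a b _ _ ha hb
  exact this hz

/-- If `G' = Z(G)`, then any two central automorphisms of `G` commute. -/
theorem central_auts_commute_of_commutator_eq_center (G : Type*) [Group G]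
    (h : commutator G = Subgroup.center G) (φ ψ : G ≃* G)
    (hφ : ∀ g : G, g⁻¹ * φ g ∈ Subgroup.center G)
    (hψ : ∀ g : G, g⁻¹ * ψ g ∈ Subgroup.center G) :
    ∀ g : G, φ (ψ g) = ψ (φ g) := by
  intro g
  have key1 := central_fix G h φ hφ
  have key2 := central_fix G h ψ hψ
  have hu := Subgroup.mem_center_iff.mp (hφ g)
  have A : φ (ψ g) = φ g * (g⁻¹ * ψ g) := by
    conv_lhs => rw [show ψ g = g * (g⁻¹ * ψ g) from (mul_inv_cancel_left g (ψ g)).symm]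
    rw [map_mul, key1 _ (hψ g)]
  have B : ψ (φ g) = ψ g * (g⁻¹ * φ g) := by
    conv_lhs => rw [show φ g = g * (g⁻¹ * φ g) from (mul_inv_cancel_left g (φ g)).symm]
    rw [map_mul, key2 _ (hφ g)]
  calc φ (ψ g) = φ g * (g⁻¹ * ψ g) := A
    _ = g * ((g⁻¹ * φ g) * (g⁻¹ * ψ g)) := by group
    _ = g * ((g⁻¹ * ψ g) * (g⁻¹ * φ g)) := by rw [← hu (g⁻¹ * ψ g)]
    _ = ψ g * (g⁻¹ * φ g) := by group
    _ = ψ (φ g) := B.symm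
end

section
/- If G is a finite p-group of nilpotency class exactly 2, then the exponent of G' equals the exponent of G/Z(G). -/
open scoped commutatorElement IsMulCommutative

lemma central_commutator_pow {G : Type*} [Group G]
    (h2 : commutator G ≤ Subgroup.center G) (a b : G) (n : ℕ) :
    ⁅a, b⁆ ^ n = ⁅a ^ n, b⁆ := by
  induction n with
  | zero => simp
  | succ n ih =>
    have hc : ⁅a, b⁆ ∈ Subgroup.center G :=
      h2 (Subgroup.commutator_mem_commutator (Subgroup.mem_top a) (Subgroup.mem_top b))
    rw [Subgroup.mem_center_iff] at hc
    have key : ⁅a ^ (n + 1), b⁆ = (a ^ n * ⁅a, b⁆ * (a ^ n)⁻¹) * ⁅a ^ n, b⁆ := by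
      simp only [commutatorElement_def, pow_succ]
      group
    rw [pow_succ, ih, key, hc (a ^ n)]
    simpa using hc ⁅a ^ n, b⁆

/-- If `G` is a finite `p`-group of nilpotency class exactly 2, then
`exp(G') = exp(G/Z(G))`. -/
theorem exponent_commutator_eq_exponent_quotient_center (G : Type*) [Group G]
    [Finite G] (p : ℕ) (hp : p.Prime) (hpG : IsPGroup p G)
    (h2 : commutator G ≤ Subgroup.center G)
    (hna : ¬ ∀ a b : G, a * b = b * a) :
    Monoid.exponent ↥(commutator G) =
      Monoid.exponent (G ⧸ Subgroup.center G) := by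
  set m := Monoid.exponent ↥(commutator G) with hm
  set n := Monoid.exponent (G ⧸ Subgroup.center G) with hn
  apply Nat.dvd_antisymm
  · -- m ∣ n : every commutator has order dividing n
    rw [hm, Monoid.exponent_dvd_iff_forall_pow_eq_one]
    have hx : ∀ x ∈ commutator G, x ^ n = 1 := by
      have hle : commutator G ≤
          ((powMonoidHom n : Subgroup.center G →* Subgroup.center G).ker).map
            (Subgroup.center G).subtype := by
        rw [commutator, Subgroup.commutator_le]
        intro g _ h _
        have hc : ⁅g, h⁆ ∈ Subgroup.center G :=
          h2 (Subgroup.commutator_mem_commutator (Subgroup.mem_top g) (Subgroup.mem_top h))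
        refine ⟨⟨⁅g, h⁆, hc⟩, ?_, rfl⟩
        have h1 : ⁅g, h⁆ ^ n = 1 := by
          rw [central_commutator_pow h2]
          have h0 : ((g : G ⧸ Subgroup.center G)) ^ n = 1 :=
            Monoid.pow_exponent_eq_one _
          have hg : g ^ n ∈ Subgroup.center G := by
            rw [← QuotientGroup.eq_one_iff]
            exact_mod_cast h0
          exact commutatorElement_eq_one_iff_commute.mpr
            ((Subgroup.mem_center_iff.mp hg h).symm)
        simpa [MonoidHom.mem_ker, powMonoidHom, Subtype.ext_iff] using h1
      intro x hxmem
      obtain ⟨y, hy, rfl⟩ := hle hxmem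
      have h1 : y ^ n = 1 := by simpa [MonoidHom.mem_ker, powMonoidHom] using hy
      simpa [Subtype.ext_iff] using h1
    intro y
    ext
    push_cast
    exact hx y y.2
  · -- n ∣ m : for every g, g ^ m is central
    rw [hn, Monoid.exponent_dvd_iff_forall_pow_eq_one]
    intro x
    induction x using QuotientGroup.induction_on with
    | H g =>
      rw [show ((g : G ⧸ Subgroup.center G)) ^ m = ((g ^ m : G) : G ⧸ Subgroup.center G) by
        push_cast; rfl, QuotientGroup.eq_one_iff, Subgroup.mem_center_iff]
      intro b
      have hmem : ⁅g, b⁆ ∈ commutator G :=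
        Subgroup.commutator_mem_commutator (Subgroup.mem_top g) (Subgroup.mem_top b)
      have h1 : (⟨⁅g, b⁆, hmem⟩ : ↥(commutator G)) ^ m = 1 :=
        Monoid.pow_exponent_eq_one _
      have h1' : ⁅g, b⁆ ^ m = 1 := by
        simpa [Subtype.ext_iff] using h1
      rw [central_commutator_pow h2] at h1'
      exact (commutatorElement_eq_one_iff_commute.mp h1').symm
end

section
/- For the group G = G_n(m,p) defined by the presentation with generators a₀,...,aₙ and relations a₁^p = 1, a₂^{p^m} = 1, aᵢ^{p²} = 1 (3 ≤ i ≤ n), a_{n-1}^p = a₀^p, [a₁,a₀]=1, [aₙ,a₀]=a₁, [a_{i-1},a₀]=aᵢ^p (3 ≤ i ≤ n), [aᵢ,aⱼ]=1 (1 ≤ i < j ≤ n), the center satisfies Z(G) = ⟨a₂^p⟩ × G', and G is nilpotent of class 2. -/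
/-- The relations defining the group `G_n(m,p)` (a generalization of group
no. 92 of the Hall–Senior table) on generators `a₀, a₁, …, aₙ`. Commutators
are written `[x,y] = x⁻¹y⁻¹xy`. -/
def GnmpRels (n m p : ℕ) (hn : 3 ≤ n) : Set (FreeGroup (Fin (n + 1))) :=
  let a : Fin (n + 1) → FreeGroup (Fin (n + 1)) := fun i => FreeGroup.of i
  let a0 : FreeGroup (Fin (n + 1)) := a ⟨0, by omega⟩
  let a1 : FreeGroup (Fin (n + 1)) := a ⟨1, by omega⟩
  let a2 : FreeGroup (Fin (n + 1)) := a ⟨2, by omega⟩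
  -- a₁ᵖ = 1
  {a1 ^ p} ∪
  -- a₂^{pᵐ} = 1
  {a2 ^ p ^ m} ∪
  -- aᵢ^{p²} = 1 for 3 ≤ i ≤ n
  {w | ∃ i : ℕ, ∃ _ : 3 ≤ i, ∃ _ : i ≤ n, w = a ⟨i, by omega⟩ ^ p ^ 2} ∪
  -- a_{n-1}ᵖ = a₀ᵖ
  {a ⟨n - 1, by omega⟩ ^ p * (a0 ^ p)⁻¹} ∪
  -- [a₁, a₀] = 1
  {a1⁻¹ * a0⁻¹ * a1 * a0} ∪
  -- [aₙ, a₀] = a₁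
  {(a ⟨n, by omega⟩)⁻¹ * a0⁻¹ * a ⟨n, by omega⟩ * a0 * a1⁻¹} ∪
  -- [a_{i-1}, a₀] = aᵢᵖ for 3 ≤ i ≤ n
  {w | ∃ i : ℕ, ∃ _ : 3 ≤ i, ∃ _ : i ≤ n,
    w = (a ⟨i - 1, by omega⟩)⁻¹ * a0⁻¹ * a ⟨i - 1, by omega⟩ * a0 *
      (a ⟨i, by omega⟩ ^ p)⁻¹} ∪
  -- [aᵢ, aⱼ] = 1 for 1 ≤ i < j ≤ n
  {w | ∃ i j : ℕ, ∃ _ : 1 ≤ i, ∃ _ : i < j, ∃ _ : j ≤ n,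
    w = (a ⟨i, by omega⟩)⁻¹ * (a ⟨j, by omega⟩)⁻¹ * a ⟨i, by omega⟩ *
      a ⟨j, by omega⟩}


namespace Gnmp

section Heisenberg


variable (p : ℕ)

/-- The additive hom `ZMod p →+ ZMod p²` sending `1` to `p`. -/
def mu : ZMod p →+ ZMod (p ^ 2) :=
  ZMod.lift p ⟨zmultiplesHom (ZMod (p ^ 2)) ((p : ZMod (p ^ 2))), by
    simp only [zmultiplesHom_apply]
    have : ((p ^ 2 : ℕ) : ZMod (p ^ 2)) = 0 := ZMod.natCast_self _
    push_cast at this ⊢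
    rw [zsmul_eq_mul]
    push_cast
    rw [← sq, this]⟩

@[simp] lemma mu_intCast (k : ℤ) : mu p ((k : ZMod p)) = (k : ZMod (p ^ 2)) * p := by
  rw [mu, ZMod.lift_coe]
  simp [zmultiplesHom_apply, zsmul_eq_mul]

@[simp] lemma mu_one : mu p (1 : ZMod p) = (p : ZMod (p ^ 2)) := by
  have := mu_intCast p 1
  simpa using this

@[ext] structure Heis where
  x : ZMod p
  y : ZMod p
  z : ZMod (p ^ 2)

namespace Heis

variable {p}

instance : Mul (Heis p) := ⟨fun a b => ⟨a.x + b.x, a.y + b.y, a.z + b.z + mu p (a.y * b.x)⟩⟩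
instance : One (Heis p) := ⟨⟨0, 0, 0⟩⟩
instance : Inv (Heis p) := ⟨fun a => ⟨-a.x, -a.y, -a.z + mu p (a.y * a.x)⟩⟩

@[simp] lemma mul_x (a b : Heis p) : (a * b).x = a.x + b.x := rfl
@[simp] lemma mul_y (a b : Heis p) : (a * b).y = a.y + b.y := rfl
@[simp] lemma mul_z (a b : Heis p) : (a * b).z = a.z + b.z + mu p (a.y * b.x) := rfl
@[simp] lemma one_x : (1 : Heis p).x = 0 := rfl
@[simp] lemma one_y : (1 : Heis p).y = 0 := rfl
@[simp] lemma one_z : (1 : Heis p).z = 0 := rfl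
@[simp] lemma inv_x (a : Heis p) : a⁻¹.x = -a.x := rfl
@[simp] lemma inv_y (a : Heis p) : a⁻¹.y = -a.y := rfl
@[simp] lemma inv_z (a : Heis p) : a⁻¹.z = -a.z + mu p (a.y * a.x) := rfl

instance : Group (Heis p) where
  mul_assoc a b c := by
    refine Heis.ext ?_ ?_ ?_ <;>
      simp only [mul_x, mul_y, mul_z, add_mul, mul_add, map_add] <;> abel
  one_mul a := by refine Heis.ext ?_ ?_ ?_ <;> simp
  mul_one a := by refine Heis.ext ?_ ?_ ?_ <;> simp
  inv_mul_cancel a := by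
    refine Heis.ext ?_ ?_ ?_ <;> simp [neg_mul]

lemma pow_eq (a : Heis p) (h : a.y * a.x = 0) (k : ℕ) :
    a ^ k = ⟨(k : ZMod p) * a.x, (k : ZMod p) * a.y, (k : ZMod (p ^ 2)) * a.z⟩ := by
  induction k with
  | zero => refine Heis.ext ?_ ?_ ?_ <;> simp
  | succ k ih =>
    rw [pow_succ, ih]
    refine Heis.ext ?_ ?_ ?_ <;> push_cast <;> simp [mul_assoc, h, add_mul] <;> ring

lemma zpow_eq (a : Heis p) (h : a.y * a.x = 0) (k : ℤ) :
    a ^ k = ⟨(k : ZMod p) * a.x, (k : ZMod p) * a.y, (k : ZMod (p ^ 2)) * a.z⟩ := by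
  have h' : a.x * a.y = 0 := by rw [mul_comm]; exact h
  cases k with
  | ofNat k => rw [Int.ofNat_eq_coe, zpow_natCast, pow_eq a h k]; push_cast; rfl
  | negSucc k =>
    rw [zpow_negSucc, pow_eq a h (k+1)]
    refine Heis.ext ?_ ?_ ?_ <;>
      simp [Int.negSucc_eq, mul_assoc, h, h', mul_add, add_mul, mul_comm, mul_left_comm] <;>
      push_cast <;> ring_nf <;> simp [mul_comm, h', mul_assoc]

lemma comm_of (a b : Heis p) (h : a.y * b.x = b.y * a.x) : a * b = b * a := by
  refine Heis.ext ?_ ?_ ?_ <;> simp [h] <;> ring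

end Heis


lemma Heis.comm_formula {p : ℕ} (a b : Heis p) :
    a⁻¹ * b⁻¹ * a * b = ⟨0, 0, mu p (a.y * b.x) - mu p (b.y * a.x)⟩ := by
  refine Heis.ext ?_ ?_ ?_ <;>
    simp [neg_mul, mul_comm, mul_left_comm, add_mul, mul_add, sub_eq_add_neg] <;> abel

lemma Heis.comm_eq_one_of_x {p : ℕ} (a b : Heis p) (ha : a.x = 0) (hb : b.x = 0) :
    a⁻¹ * b⁻¹ * a * b = 1 := by
  rw [Heis.comm_formula]
  refine Heis.ext ?_ ?_ ?_ <;> simp [ha, hb]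

end Heisenberg

section Helpers
variable {G : Type*} [Group G]


lemma comm_word {u v : G} (h : u * v = v * u) : u⁻¹ * v⁻¹ * u * v = 1 := by
  have : u⁻¹ * v⁻¹ * u * v = u⁻¹ * (v⁻¹ * (u * v)) := by group
  rw [this, h]; group

lemma mem_center_of_gen {S : Set G} (hS : Subgroup.closure S = ⊤) {x : G}
    (h : ∀ s ∈ S, s * x = x * s) : x ∈ Subgroup.center G := by
  rw [Subgroup.mem_center_iff]
  intro g
  have hg : g ∈ Subgroup.closure S := by rw [hS]; trivial
  induction hg using Subgroup.closure_induction with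
  | mem s hs => exact h s hs
  | one => simp
  | mul a b _ _ ha hb => rw [mul_assoc, hb, ← mul_assoc, ha, mul_assoc]
  | inv a _ ha =>
    have := ha.symm
    calc a⁻¹ * x = a⁻¹ * x * a * a⁻¹ := by group
    _ = a⁻¹ * (a * x) * a⁻¹ := by rw [← this]; group
    _ = x * a⁻¹ := by group

lemma center_eq_top_of_gen {S : Set G} (hS : Subgroup.closure S = ⊤)
    (h : ∀ a ∈ S, ∀ b ∈ S, a * b = b * a) : ∀ x y : G, x * y = y * x := by
  have hc : ∀ a ∈ S, a ∈ Subgroup.center G := fun a ha =>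
    mem_center_of_gen hS (fun s hs => h s hs a ha)
  have : Subgroup.closure S ≤ Subgroup.center G := (Subgroup.closure_le _).mpr hc
  rw [hS] at this
  intro x y
  exact (Subgroup.mem_center_iff.mp (this (Subgroup.mem_top x)) y).symm

/-- pulling central factors out of a product over a list -/
lemma list_prod_mul_central {ι : Type*} (l : List ι) (u v : ι → G)
    (hv : ∀ i, v i ∈ Subgroup.center G) :
    (l.map fun i => u i * v i).prod = (l.map u).prod * (l.map v).prod := by
  induction l with
  | nil => simp
  | cons a t ih =>
    simp only [List.map_cons, List.prod_cons, ih]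
    have hva := Subgroup.mem_center_iff.mp (hv a)
    have : v a * (t.map u).prod = (t.map u).prod * v a := (hva _).symm
    calc u a * v a * ((t.map u).prod * (t.map v).prod)
        = u a * (v a * (t.map u).prod) * (t.map v).prod := by group
      _ = u a * ((t.map u).prod * v a) * (t.map v).prod := by rw [this]
      _ = u a * (t.map u).prod * (v a * (t.map v).prod) := by group

lemma list_prod_eq_single {ι : Type*} {M : Type*} [Monoid M] (l : List ι) (g : ι → M) (i₀ : ι)
    (h : ∀ i ∈ l, i ≠ i₀ → g i = 1) (hl : l.Nodup) :
    (i₀ ∈ l → (l.map g).prod = g i₀) ∧ (i₀ ∉ l → (l.map g).prod = 1) := by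
  induction l with
  | nil => simp
  | cons a t ih =>
    have hat := List.nodup_cons.mp hl
    obtain ⟨ih1, ih2⟩ := ih (fun i hi hne => h i (List.mem_cons_of_mem a hi) hne) hat.2
    constructor
    · intro hmem
      rcases List.mem_cons.mp hmem with rfl | hmem'
      · simp only [List.map_cons, List.prod_cons]
        rw [ih2 hat.1, mul_one]
      · have ha1 : g a = 1 := h a (List.mem_cons_self) (fun he => hat.1 (he ▸ hmem'))
        simp only [List.map_cons, List.prod_cons, ha1, one_mul]
        exact ih1 hmem'
    · intro hnmem
      have ha1 : g a = 1 := h a (List.mem_cons_self) (fun he => hnmem (he ▸ List.mem_cons_self))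
      simp only [List.map_cons, List.prod_cons, ha1, one_mul]
      exact ih2 (fun hmem' => hnmem (List.mem_cons_of_mem a hmem'))


end Helpers

section Rels

variable (n m p : ℕ) (hn : 3 ≤ n)

lemma mem_rels_iff (w : FreeGroup (Fin (n + 1))) :
    w ∈ GnmpRels n m p hn ↔
      (w = FreeGroup.of (⟨1, by omega⟩ : Fin (n+1)) ^ p) ∨
      (w = FreeGroup.of (⟨2, by omega⟩ : Fin (n+1)) ^ p ^ m) ∨
      (∃ i : ℕ, ∃ _ : 3 ≤ i, ∃ _ : i ≤ n,
        w = FreeGroup.of (⟨i, by omega⟩ : Fin (n+1)) ^ p ^ 2) ∨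
      (w = FreeGroup.of (⟨n - 1, by omega⟩ : Fin (n+1)) ^ p *
        (FreeGroup.of (⟨0, by omega⟩ : Fin (n+1)) ^ p)⁻¹) ∨
      (w = (FreeGroup.of (⟨1, by omega⟩ : Fin (n+1)))⁻¹ *
        (FreeGroup.of (⟨0, by omega⟩ : Fin (n+1)))⁻¹ *
        FreeGroup.of (⟨1, by omega⟩ : Fin (n+1)) *
        FreeGroup.of (⟨0, by omega⟩ : Fin (n+1))) ∨
      (w = (FreeGroup.of (⟨n, by omega⟩ : Fin (n+1)))⁻¹ *
        (FreeGroup.of (⟨0, by omega⟩ : Fin (n+1)))⁻¹ *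
        FreeGroup.of (⟨n, by omega⟩ : Fin (n+1)) *
        FreeGroup.of (⟨0, by omega⟩ : Fin (n+1)) *
        (FreeGroup.of (⟨1, by omega⟩ : Fin (n+1)))⁻¹) ∨
      (∃ i : ℕ, ∃ _ : 3 ≤ i, ∃ _ : i ≤ n,
        w = (FreeGroup.of (⟨i - 1, by omega⟩ : Fin (n+1)))⁻¹ *
          (FreeGroup.of (⟨0, by omega⟩ : Fin (n+1)))⁻¹ *
          FreeGroup.of (⟨i - 1, by omega⟩ : Fin (n+1)) *
          FreeGroup.of (⟨0, by omega⟩ : Fin (n+1)) *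
          (FreeGroup.of (⟨i, by omega⟩ : Fin (n+1)) ^ p)⁻¹) ∨
      (∃ i j : ℕ, ∃ _ : 1 ≤ i, ∃ _ : i < j, ∃ _ : j ≤ n,
        w = (FreeGroup.of (⟨i, by omega⟩ : Fin (n+1)))⁻¹ *
          (FreeGroup.of (⟨j, by omega⟩ : Fin (n+1)))⁻¹ *
          FreeGroup.of (⟨i, by omega⟩ : Fin (n+1)) *
          FreeGroup.of (⟨j, by omega⟩ : Fin (n+1))) := by
  simp only [GnmpRels, Set.mem_union, Set.mem_singleton_iff, Set.mem_setOf_eq, or_assoc]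

end Rels

end Gnmp

namespace Gnmp

open scoped commutatorElement

section RelsG

variable (n m p : ℕ) (hn : 3 ≤ n)

local notation "GG" => PresentedGroup (GnmpRels n m p hn)

/-- generator -/
noncomputable abbrev A (i : Fin (n + 1)) : GG := PresentedGroup.of i

lemma rel_holds {w : FreeGroup (Fin (n + 1))} (hw : w ∈ GnmpRels n m p hn) :
    PresentedGroup.mk (GnmpRels n m p hn) w = 1 :=
  (QuotientGroup.eq_one_iff w).mpr (Subgroup.subset_normalClosure hw)

lemma rel1 : (A n m p hn ⟨1, by omega⟩) ^ p = 1 := by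
  have := rel_holds n m p hn ((mem_rels_iff n m p hn _).mpr (Or.inl rfl))
  simp only [map_pow] at this; exact this

lemma rel2 : (A n m p hn ⟨2, by omega⟩) ^ p ^ m = 1 := by
  have := rel_holds n m p hn ((mem_rels_iff n m p hn _).mpr (Or.inr (Or.inl rfl)))
  simp only [map_pow] at this; exact this

lemma rel3 (i : ℕ) (h3 : 3 ≤ i) (hi : i ≤ n) :
    (A n m p hn ⟨i, by omega⟩) ^ p ^ 2 = 1 := by
  have := rel_holds n m p hn ((mem_rels_iff n m p hn _).mpr
    (Or.inr (Or.inr (Or.inl ⟨i, h3, hi, rfl⟩))))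
  simp only [map_pow] at this; exact this

lemma rel4 : (A n m p hn ⟨n - 1, by omega⟩) ^ p = (A n m p hn ⟨0, by omega⟩) ^ p := by
  have := rel_holds n m p hn ((mem_rels_iff n m p hn _).mpr
    (Or.inr (Or.inr (Or.inr (Or.inl rfl)))))
  simp only [map_mul, map_pow, map_inv] at this
  have h2 := mul_inv_eq_one.mp this
  exact h2

lemma rel5 : (A n m p hn ⟨1, by omega⟩) * (A n m p hn ⟨0, by omega⟩) =
    (A n m p hn ⟨0, by omega⟩) * (A n m p hn ⟨1, by omega⟩) := by
  have := rel_holds n m p hn ((mem_rels_iff n m p hn _).mpr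
    (Or.inr (Or.inr (Or.inr (Or.inr (Or.inl rfl))))))
  simp only [map_mul, map_inv] at this
  replace this : (A n m p hn ⟨1, by omega⟩)⁻¹ * (A n m p hn ⟨0, by omega⟩)⁻¹ *
      A n m p hn ⟨1, by omega⟩ * A n m p hn ⟨0, by omega⟩ = 1 := this
  calc A n m p hn ⟨1, by omega⟩ * A n m p hn ⟨0, by omega⟩
      = A n m p hn ⟨0, by omega⟩ * A n m p hn ⟨1, by omega⟩ *
        ((A n m p hn ⟨1, by omega⟩)⁻¹ * (A n m p hn ⟨0, by omega⟩)⁻¹ *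
          A n m p hn ⟨1, by omega⟩ * A n m p hn ⟨0, by omega⟩) := by group
    _ = _ := by rw [this]; group

lemma rel6 : (A n m p hn ⟨n, by omega⟩)⁻¹ * (A n m p hn ⟨0, by omega⟩)⁻¹ *
    A n m p hn ⟨n, by omega⟩ * A n m p hn ⟨0, by omega⟩ = A n m p hn ⟨1, by omega⟩ := by
  have := rel_holds n m p hn ((mem_rels_iff n m p hn _).mpr
    (Or.inr (Or.inr (Or.inr (Or.inr (Or.inr (Or.inl rfl)))))))
  simp only [map_mul, map_inv] at this
  have h2 := mul_inv_eq_one.mp this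
  exact h2

lemma rel7 (i : ℕ) (h3 : 3 ≤ i) (hi : i ≤ n) :
    (A n m p hn ⟨i - 1, by omega⟩)⁻¹ * (A n m p hn ⟨0, by omega⟩)⁻¹ *
      A n m p hn ⟨i - 1, by omega⟩ * A n m p hn ⟨0, by omega⟩ =
      (A n m p hn ⟨i, by omega⟩) ^ p := by
  have := rel_holds n m p hn ((mem_rels_iff n m p hn _).mpr
    (Or.inr (Or.inr (Or.inr (Or.inr (Or.inr (Or.inr (Or.inl ⟨i, h3, hi, rfl⟩))))))))
  simp only [map_mul, map_inv, map_pow] at this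
  have h2 := mul_inv_eq_one.mp this
  exact h2

lemma rel8 (i j : ℕ) (h1 : 1 ≤ i) (hij : i < j) (hj : j ≤ n) :
    A n m p hn ⟨i, by omega⟩ * A n m p hn ⟨j, by omega⟩ =
      A n m p hn ⟨j, by omega⟩ * A n m p hn ⟨i, by omega⟩ := by
  have := rel_holds n m p hn ((mem_rels_iff n m p hn _).mpr
    (Or.inr (Or.inr (Or.inr (Or.inr (Or.inr (Or.inr (Or.inr ⟨i, j, h1, hij, hj, rfl⟩))))))))
  simp only [map_mul, map_inv] at this
  replace this : (A n m p hn ⟨i, by omega⟩)⁻¹ * (A n m p hn ⟨j, by omega⟩)⁻¹ *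
      A n m p hn ⟨i, by omega⟩ * A n m p hn ⟨j, by omega⟩ = 1 := this
  calc A n m p hn ⟨i, by omega⟩ * A n m p hn ⟨j, by omega⟩
      = A n m p hn ⟨j, by omega⟩ * A n m p hn ⟨i, by omega⟩ *
        ((A n m p hn ⟨i, by omega⟩)⁻¹ * (A n m p hn ⟨j, by omega⟩)⁻¹ *
          A n m p hn ⟨i, by omega⟩ * A n m p hn ⟨j, by omega⟩) := by group
    _ = _ := by rw [this]; group

/-- commuting of the abelian part, any order -/
lemma commute_pos (i j : ℕ) (h1 : 1 ≤ i) (hi : i ≤ n) (h1' : 1 ≤ j) (hj : j ≤ n) :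
    Commute (A n m p hn ⟨i, by omega⟩) (A n m p hn ⟨j, by omega⟩) := by
  rcases lt_trichotomy i j with h | h | h
  · exact rel8 n m p hn i j h1 h hj
  · subst h; rfl
  · exact (rel8 n m p hn j i h1' h hi).symm


lemma conj_pow' {G : Type*} [Group G] (t u : G) (q : ℕ) :
    t⁻¹ * u ^ q * t = (t⁻¹ * u * t) ^ q := by
  induction q with
  | zero => simp
  | succ q ih => rw [pow_succ, pow_succ, ← ih]; group

lemma conj_mid (k : ℕ) (h2 : 2 ≤ k) (hk : k ≤ n - 1) :
    (A n m p hn ⟨0, by omega⟩)⁻¹ * A n m p hn ⟨k, by omega⟩ * A n m p hn ⟨0, by omega⟩ =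
      A n m p hn ⟨k, by omega⟩ * (A n m p hn ⟨k + 1, by omega⟩) ^ p := by
  have w := rel7 n m p hn (k + 1) (by omega) (by omega)
  simp only [Nat.add_sub_cancel] at w
  calc (A n m p hn ⟨0, by omega⟩)⁻¹ * A n m p hn ⟨k, by omega⟩ * A n m p hn ⟨0, by omega⟩
      = A n m p hn ⟨k, by omega⟩ *
        ((A n m p hn ⟨k, by omega⟩)⁻¹ * (A n m p hn ⟨0, by omega⟩)⁻¹ *
          A n m p hn ⟨k, by omega⟩ * A n m p hn ⟨0, by omega⟩) := by group
    _ = _ := by rw [w]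

lemma conj_top :
    (A n m p hn ⟨0, by omega⟩)⁻¹ * A n m p hn ⟨n, by omega⟩ * A n m p hn ⟨0, by omega⟩ =
      A n m p hn ⟨n, by omega⟩ * A n m p hn ⟨1, by omega⟩ := by
  have w := rel6 n m p hn
  calc (A n m p hn ⟨0, by omega⟩)⁻¹ * A n m p hn ⟨n, by omega⟩ * A n m p hn ⟨0, by omega⟩
      = A n m p hn ⟨n, by omega⟩ *
        ((A n m p hn ⟨n, by omega⟩)⁻¹ * (A n m p hn ⟨0, by omega⟩)⁻¹ *
          A n m p hn ⟨n, by omega⟩ * A n m p hn ⟨0, by omega⟩) := by group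
    _ = _ := by rw [w]

lemma conj_zero_by_top :
    (A n m p hn ⟨n, by omega⟩)⁻¹ * A n m p hn ⟨0, by omega⟩ * A n m p hn ⟨n, by omega⟩ =
      A n m p hn ⟨0, by omega⟩ * (A n m p hn ⟨1, by omega⟩)⁻¹ := by
  have w := rel6 n m p hn
  have h1 : (A n m p hn ⟨n, by omega⟩)⁻¹ * (A n m p hn ⟨0, by omega⟩)⁻¹ *
      A n m p hn ⟨n, by omega⟩ = A n m p hn ⟨1, by omega⟩ * (A n m p hn ⟨0, by omega⟩)⁻¹ := by
    rw [← w]; group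
  calc (A n m p hn ⟨n, by omega⟩)⁻¹ * A n m p hn ⟨0, by omega⟩ * A n m p hn ⟨n, by omega⟩
      = ((A n m p hn ⟨n, by omega⟩)⁻¹ * (A n m p hn ⟨0, by omega⟩)⁻¹ *
          A n m p hn ⟨n, by omega⟩)⁻¹ := by group
    _ = _ := by rw [h1]; group

lemma central_A1 : A n m p hn ⟨1, by omega⟩ ∈ Subgroup.center (PresentedGroup (GnmpRels n m p hn)) := by
  apply mem_center_of_gen (PresentedGroup.closure_range_of _)
  rintro s ⟨i, rfl⟩
  by_cases h0 : (i : ℕ) = 0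
  · have : i = (⟨0, by omega⟩ : Fin (n+1)) := Fin.ext h0
    rw [this]
    exact (rel5 n m p hn).symm
  · have h1 : 1 ≤ (i : ℕ) := by omega
    have h2 : (i : ℕ) ≤ n := by omega
    have : PresentedGroup.of i = A n m p hn ⟨(i : ℕ), by omega⟩ := rfl
    rw [this]
    exact commute_pos n m p hn (i : ℕ) 1 h1 h2 (by omega) (by omega)

lemma central_pow (k : ℕ) (h2 : 2 ≤ k) (hk : k ≤ n) :
    (A n m p hn ⟨k, by omega⟩) ^ p ∈
      Subgroup.center (PresentedGroup (GnmpRels n m p hn)) := by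
  apply mem_center_of_gen (PresentedGroup.closure_range_of _)
  rintro s ⟨i, rfl⟩
  by_cases h0 : (i : ℕ) = 0
  · have hi0 : i = (⟨0, by omega⟩ : Fin (n+1)) := Fin.ext h0
    rw [hi0]
    have key : (A n m p hn ⟨0, by omega⟩)⁻¹ * (A n m p hn ⟨k, by omega⟩) ^ p *
        A n m p hn ⟨0, by omega⟩ = (A n m p hn ⟨k, by omega⟩) ^ p := by
      rw [conj_pow']
      rcases eq_or_lt_of_le hk with heq | hlt
      · have hfin : (⟨k, by omega⟩ : Fin (n+1)) = ⟨n, by omega⟩ := Fin.ext (by simpa using heq)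
        rw [hfin, conj_top]
        have hcomm : Commute (A n m p hn ⟨n, by omega⟩) (A n m p hn ⟨1, by omega⟩) :=
          commute_pos n m p hn n 1 (by omega) (by omega) (by omega) (by omega)
        rw [hcomm.mul_pow, rel1, mul_one]
      · rw [conj_mid n m p hn k h2 (by omega)]
        have hcomm : Commute (A n m p hn ⟨k, by omega⟩)
            ((A n m p hn ⟨k + 1, by omega⟩) ^ p) :=
          (commute_pos n m p hn k (k+1) (by omega) (by omega) (by omega) (by omega)).pow_right p
        rw [hcomm.mul_pow, ← pow_mul, ← pow_two, rel3 n m p hn (k+1) (by omega) (by omega),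
          mul_one]
    have h3 : A n m p hn ⟨0, by omega⟩ * ((A n m p hn ⟨0, by omega⟩)⁻¹ *
        (A n m p hn ⟨k, by omega⟩) ^ p * A n m p hn ⟨0, by omega⟩) =
        (A n m p hn ⟨k, by omega⟩) ^ p * A n m p hn ⟨0, by omega⟩ := by
      simp [mul_assoc]
    rw [key] at h3
    exact h3
  · have h1 : 1 ≤ (i : ℕ) := by omega
    have hi : (i : ℕ) ≤ n := by omega
    have : PresentedGroup.of i = A n m p hn ⟨(i : ℕ), by omega⟩ := rfl
    rw [this]
    exact (commute_pos n m p hn (i : ℕ) k h1 hi (by omega) hk).pow_right p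

lemma comm_word_pos_zero (k : ℕ) (h1 : 1 ≤ k) (hk : k ≤ n) :
    A n m p hn ⟨k, by omega⟩ * A n m p hn ⟨0, by omega⟩ * (A n m p hn ⟨k, by omega⟩)⁻¹ *
      (A n m p hn ⟨0, by omega⟩)⁻¹ ∈
      Subgroup.center (PresentedGroup (GnmpRels n m p hn)) := by
  rcases eq_or_lt_of_le h1 with heq | h2
  · -- k = 1
    have hfin : (⟨k, by omega⟩ : Fin (n+1)) = ⟨1, by omega⟩ := Fin.ext (by simpa using heq.symm)
    rw [hfin]
    have : A n m p hn ⟨1, by omega⟩ * A n m p hn ⟨0, by omega⟩ * (A n m p hn ⟨1, by omega⟩)⁻¹ *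
        (A n m p hn ⟨0, by omega⟩)⁻¹ = 1 := by
      rw [rel5]; group
    rw [this]; exact Subgroup.one_mem _
  · -- 2 ≤ k
    have key : ∃ c, c ∈ Subgroup.center (PresentedGroup (GnmpRels n m p hn)) ∧
        (A n m p hn ⟨0, by omega⟩)⁻¹ * A n m p hn ⟨k, by omega⟩ * A n m p hn ⟨0, by omega⟩ =
          A n m p hn ⟨k, by omega⟩ * c := by
      rcases eq_or_lt_of_le hk with heq | hlt
      · refine ⟨A n m p hn ⟨1, by omega⟩, central_A1 n m p hn, ?_⟩
        have hfin : (⟨k, by omega⟩ : Fin (n+1)) = ⟨n, by omega⟩ := Fin.ext (by simpa using heq)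
        rw [hfin]; exact conj_top n m p hn
      · exact ⟨(A n m p hn ⟨k + 1, by omega⟩) ^ p,
          central_pow n m p hn (k+1) (by omega) (by omega),
          conj_mid n m p hn k (by omega) (by omega)⟩
    obtain ⟨c, hc, e⟩ := key
    have e2 : A n m p hn ⟨k, by omega⟩ * A n m p hn ⟨0, by omega⟩ =
        A n m p hn ⟨0, by omega⟩ * (A n m p hn ⟨k, by omega⟩ * c) := by
      rw [← e]; group
    have hcc := Subgroup.mem_center_iff.mp hc
    have : A n m p hn ⟨k, by omega⟩ * A n m p hn ⟨0, by omega⟩ *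
        (A n m p hn ⟨k, by omega⟩)⁻¹ * (A n m p hn ⟨0, by omega⟩)⁻¹ = c := by
      rw [e2]
      calc A n m p hn ⟨0, by omega⟩ * (A n m p hn ⟨k, by omega⟩ * c) *
            (A n m p hn ⟨k, by omega⟩)⁻¹ * (A n m p hn ⟨0, by omega⟩)⁻¹
          = A n m p hn ⟨0, by omega⟩ * (A n m p hn ⟨k, by omega⟩ *
              ((A n m p hn ⟨k, by omega⟩)⁻¹ * c)) * (A n m p hn ⟨0, by omega⟩)⁻¹ := by
            rw [hcc ((A n m p hn ⟨k, by omega⟩)⁻¹)]; group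
        _ = A n m p hn ⟨0, by omega⟩ * c * (A n m p hn ⟨0, by omega⟩)⁻¹ := by group
        _ = c * A n m p hn ⟨0, by omega⟩ * (A n m p hn ⟨0, by omega⟩)⁻¹ := by
            rw [hcc (A n m p hn ⟨0, by omega⟩)]
        _ = c := by group
    rw [this]; exact hc

lemma comm_mod_center (i j : Fin (n + 1)) :
    PresentedGroup.of i * PresentedGroup.of j * (PresentedGroup.of i)⁻¹ *
      (PresentedGroup.of j)⁻¹ ∈
      Subgroup.center (PresentedGroup (GnmpRels n m p hn)) := by
  by_cases hi : (i : ℕ) = 0 <;> by_cases hj : (j : ℕ) = 0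
  · have : i = j := Fin.ext (by omega)
    subst this
    have : PresentedGroup.of i * PresentedGroup.of i * (PresentedGroup.of i)⁻¹ *
        (PresentedGroup.of i)⁻¹ = (1 : PresentedGroup (GnmpRels n m p hn)) := by group
    rw [this]; exact Subgroup.one_mem _
  · -- i = 0, j ≥ 1
    have hi0 : i = (⟨0, by omega⟩ : Fin (n+1)) := Fin.ext hi
    have hj0 : j = (⟨(j : ℕ), by omega⟩ : Fin (n+1)) := rfl
    have hw := comm_word_pos_zero n m p hn (j : ℕ) (by omega) (by omega)
    have hinv := Subgroup.inv_mem _ hw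
    have : PresentedGroup.of i * PresentedGroup.of j * (PresentedGroup.of i)⁻¹ *
        (PresentedGroup.of j)⁻¹ =
        (A n m p hn ⟨(j : ℕ), by omega⟩ * A n m p hn ⟨0, by omega⟩ *
          (A n m p hn ⟨(j : ℕ), by omega⟩)⁻¹ * (A n m p hn ⟨0, by omega⟩)⁻¹)⁻¹ := by
      rw [hi0]; group
    rw [this]; exact hinv
  · -- i ≥ 1, j = 0
    have hj0 : j = (⟨0, by omega⟩ : Fin (n+1)) := Fin.ext hj
    rw [hj0]
    exact comm_word_pos_zero n m p hn (i : ℕ) (by omega) (by omega)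
  · have hcw := commute_pos n m p hn (i : ℕ) (j : ℕ) (by omega) (by omega) (by omega) (by omega)
    have hcw' : PresentedGroup.of i * PresentedGroup.of j =
        PresentedGroup.of j * PresentedGroup.of i := hcw
    have : PresentedGroup.of i * PresentedGroup.of j * (PresentedGroup.of i)⁻¹ *
        (PresentedGroup.of j)⁻¹ = (1 : PresentedGroup (GnmpRels n m p hn)) := by
      rw [hcw']; group
    rw [this]; exact Subgroup.one_mem _

lemma commutator_mem_center (g h : PresentedGroup (GnmpRels n m p hn)) :
    ⁅g, h⁆ ∈ Subgroup.center (PresentedGroup (GnmpRels n m p hn)) := by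
  set Z := Subgroup.center (PresentedGroup (GnmpRels n m p hn)) with hZ
  let π := QuotientGroup.mk' Z
  have hsurj : Function.Surjective π := QuotientGroup.mk'_surjective Z
  have hgen : Subgroup.closure (Set.range fun i : Fin (n+1) => π (PresentedGroup.of i)) = ⊤ := by
    have h1 : (Set.range fun i : Fin (n+1) => π (PresentedGroup.of i)) =
        π '' (Set.range (PresentedGroup.of : Fin (n+1) → PresentedGroup (GnmpRels n m p hn))) :=
      Set.range_comp (⇑π) PresentedGroup.of
    rw [h1, ← MonoidHom.map_closure, PresentedGroup.closure_range_of,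
      ← MonoidHom.range_eq_map]
    exact MonoidHom.range_eq_top.mpr hsurj
  have hcomm : ∀ a ∈ (Set.range fun i : Fin (n+1) => π (PresentedGroup.of i)),
      ∀ b ∈ (Set.range fun i : Fin (n+1) => π (PresentedGroup.of i)), a * b = b * a := by
    rintro a ⟨i, rfl⟩ b ⟨j, rfl⟩
    have hmem : ((PresentedGroup.of i : PresentedGroup (GnmpRels n m p hn)) *
        PresentedGroup.of j) * (PresentedGroup.of j * PresentedGroup.of i)⁻¹ ∈ Z := by
      have : ((PresentedGroup.of i : PresentedGroup (GnmpRels n m p hn)) * PresentedGroup.of j) *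
          (PresentedGroup.of j * PresentedGroup.of i)⁻¹ =
          PresentedGroup.of i * PresentedGroup.of j * (PresentedGroup.of i)⁻¹ *
            (PresentedGroup.of j)⁻¹ := by group
      rw [this]; exact comm_mod_center n m p hn i j
    have h1 : π (((PresentedGroup.of i : PresentedGroup (GnmpRels n m p hn)) *
        PresentedGroup.of j) * (PresentedGroup.of j * PresentedGroup.of i)⁻¹) = 1 :=
      (QuotientGroup.eq_one_iff _).mpr hmem
    rw [map_mul, map_inv] at h1
    have h2 := mul_inv_eq_one.mp h1
    simpa [map_mul] using h2
  have hall := center_eq_top_of_gen hgen hcomm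
  have h1 : π ⁅g, h⁆ = 1 := by
    rw [map_commutatorElement]
    exact commutatorElement_eq_one_iff_commute.mpr (hall _ _)
  exact (QuotientGroup.eq_one_iff _).mp h1

lemma commutator_le_center :
    commutator (PresentedGroup (GnmpRels n m p hn)) ≤
      Subgroup.center (PresentedGroup (GnmpRels n m p hn)) := by
  rw [commutator_def]
  exact Subgroup.commutator_le.mpr fun g _ h _ => commutator_mem_center n m p hn g h

end RelsG

section Homs

variable (n m p : ℕ)

/-- assignment detecting `a₁` -/
def f1v : Fin (n + 1) → Heis p := fun i =>
  if (i : ℕ) = 0 then ⟨1, 0, 0⟩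
  else if (i : ℕ) = 1 then ⟨0, 0, (p : ZMod (p ^ 2))⟩
  else if (i : ℕ) = n then ⟨0, 1, 0⟩ else 1

lemma f1v_0 (h : 0 < n + 1) : f1v n p ⟨0, h⟩ = ⟨1, 0, 0⟩ := by
  simp [f1v]

lemma f1v_1 (hn : 3 ≤ n) (h : 1 < n + 1) : f1v n p ⟨1, h⟩ = ⟨0, 0, (p : ZMod (p ^ 2))⟩ := by
  simp [f1v]

lemma f1v_n (hn : 3 ≤ n) (h : n < n + 1) : f1v n p ⟨n, h⟩ = ⟨0, 1, 0⟩ := by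
  simp only [f1v]
  rw [if_neg (by omega), if_neg (by omega)]
  simp

lemma f1v_mid (v : ℕ) (h0 : v ≠ 0) (h1 : v ≠ 1) (hv : v ≠ n) (h : v < n + 1) :
    f1v n p ⟨v, h⟩ = 1 := by
  simp only [f1v]
  rw [if_neg (by omega), if_neg (by omega), if_neg (by omega)]

lemma f1v_x_zero (v : ℕ) (hv : 1 ≤ v) (h : v < n + 1) : (f1v n p ⟨v, h⟩).x = 0 := by
  simp only [f1v]
  split_ifs <;> first | rfl | omega

lemma f1v_rels (hn : 3 ≤ n) (hm : 1 ≤ m) :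
    ∀ r ∈ GnmpRels n m p hn, FreeGroup.lift (f1v n p) r = 1 := by
  intro r hr
  rw [mem_rels_iff] at hr
  rcases hr with h|h|⟨i,h3,hi,h⟩|h|h|h|⟨i,h3,hi,h⟩|⟨i,j,h1,hij,hj,h⟩ <;> subst h <;>
    simp only [map_mul, map_inv, map_pow, FreeGroup.lift_apply_of]
  · -- a1^p
    rw [f1v_1 n p hn]
    rw [Heis.pow_eq _ (by simp)]
    refine Heis.ext ?_ ?_ ?_ <;> simp [← Nat.cast_mul, ← pow_two, ← Nat.cast_pow,
      ZMod.natCast_self]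
  · -- a2^{p^m}
    rw [f1v_mid n p 2 (by omega) (by omega) (by omega)]
    simp
  · -- ai^{p²}
    by_cases hin : i = n
    · have hfin : (⟨i, by omega⟩ : Fin (n+1)) = ⟨n, by omega⟩ := Fin.ext (by simp [hin])
      rw [hfin, f1v_n n p hn]
      rw [Heis.pow_eq _ (by simp)]
      refine Heis.ext ?_ ?_ ?_ <;> simp [ZMod.natCast_self]
    · rw [f1v_mid n p i (by omega) (by omega) hin]
      simp
  · -- a_{n-1}^p = a0^p
    rw [f1v_mid n p (n-1) (by omega) (by omega) (by omega), f1v_0 n p, one_pow, one_mul,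
      Heis.pow_eq (⟨1,0,0⟩ : Heis p) (by simp) p]
    refine Heis.ext ?_ ?_ ?_ <;> simp [ZMod.natCast_self]
  · -- [a1,a0]
    rw [f1v_1 n p hn, f1v_0 n p]
    rw [Heis.comm_formula]
    refine Heis.ext ?_ ?_ ?_ <;> simp
  · -- [an,a0] = a1
    rw [f1v_n n p hn, f1v_0 n p, f1v_1 n p hn]
    rw [show ((⟨0,1,0⟩ : Heis p))⁻¹ * (⟨1,0,0⟩ : Heis p)⁻¹ * ⟨0,1,0⟩ * ⟨1,0,0⟩ *
        ((⟨0,0,(p : ZMod (p^2))⟩ : Heis p))⁻¹ =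
        ((⟨0,1,0⟩ : Heis p)⁻¹ * (⟨1,0,0⟩ : Heis p)⁻¹ * ⟨0,1,0⟩ * ⟨1,0,0⟩) *
        ((⟨0,0,(p : ZMod (p^2))⟩ : Heis p))⁻¹ from rfl, Heis.comm_formula]
    refine Heis.ext ?_ ?_ ?_ <;> simp
  · -- [a_{i-1},a0] = a_i^p
    rw [f1v_mid n p (i-1) (by omega) (by omega) (by omega), f1v_0 n p]
    have h1 : ((1 : Heis p))⁻¹ * (⟨1,0,0⟩ : Heis p)⁻¹ * 1 * ⟨1,0,0⟩ = 1 := by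
      group
    rw [h1]
    by_cases hin : i = n
    · have hfin : (⟨i, by omega⟩ : Fin (n+1)) = ⟨n, by omega⟩ := Fin.ext (by simp [hin])
      rw [hfin, f1v_n n p hn, Heis.pow_eq _ (by simp)]
      refine Heis.ext ?_ ?_ ?_ <;> simp [ZMod.natCast_self]
    · rw [f1v_mid n p i (by omega) (by omega) hin]
      simp
  · -- [ai,aj] = 1 for 1 ≤ i < j ≤ n
    exact Heis.comm_eq_one_of_x _ _ (f1v_x_zero n p i (by omega) _)
      (f1v_x_zero n p j (by omega) _)

/-- assignment detecting `a_j^p`, for `3 ≤ j ≤ n` -/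
def fJv (j : ℕ) : Fin (n + 1) → Heis p := fun i =>
  if (i : ℕ) = 0 then ⟨1, 0, if j = n - 1 then 1 else 0⟩
  else if (i : ℕ) = j - 1 then ⟨0, 1, 0⟩
  else if (i : ℕ) = j then ⟨0, 0, 1⟩ else 1

section FJ

variable (j : ℕ)

lemma fJv_0 (h : 0 < n + 1) :
    fJv n p j ⟨0, h⟩ = ⟨1, 0, if j = n - 1 then 1 else 0⟩ := by simp [fJv]

lemma fJv_jm1 (hj3 : 3 ≤ j) (hjn : j ≤ n) (h : j - 1 < n + 1) :
    fJv n p j ⟨j - 1, h⟩ = ⟨0, 1, 0⟩ := by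
  simp only [fJv]
  rw [if_neg (by omega)]
  simp

lemma fJv_j (hj3 : 3 ≤ j) (hjn : j ≤ n) (h : j < n + 1) :
    fJv n p j ⟨j, h⟩ = ⟨0, 0, 1⟩ := by
  simp only [fJv]
  rw [if_neg (by omega), if_neg (by omega)]
  simp

lemma fJv_other (hj3 : 3 ≤ j) (hjn : j ≤ n) (v : ℕ) (h0 : v ≠ 0) (h1 : v ≠ j - 1)
    (h2 : v ≠ j) (h : v < n + 1) :
    fJv n p j ⟨v, h⟩ = 1 := by
  simp only [fJv]
  rw [if_neg (by omega), if_neg (by omega), if_neg (by omega)]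

lemma fJv_x_zero (v : ℕ) (hv : 1 ≤ v) (h : v < n + 1) : (fJv n p j ⟨v, h⟩).x = 0 := by
  simp only [fJv]
  split_ifs <;> first | rfl | omega

lemma fJv_rels (hj3 : 3 ≤ j) (hjn : j ≤ n) (hn : 3 ≤ n) (hm : 1 ≤ m) :
    ∀ r ∈ GnmpRels n m p hn, FreeGroup.lift (fJv n p j) r = 1 := by
  have hY : ∀ q : ℕ, 1 ≤ q → ((⟨0,1,0⟩ : Heis p)) ^ (p ^ q) = 1 := by
    intro q hq
    rw [Heis.pow_eq _ (by simp)]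
    refine Heis.ext ?_ ?_ ?_ <;>
      simp [Nat.cast_pow, ZMod.natCast_self, zero_pow (by omega : q ≠ 0)]
  intro r hr
  rw [mem_rels_iff] at hr
  rcases hr with h|h|⟨i,h3,hi,h⟩|h|h|h|⟨i,h3,hi,h⟩|⟨i,j',h1,hij,hj',h⟩ <;> subst h <;>
    simp only [map_mul, map_inv, map_pow, FreeGroup.lift_apply_of]
  · -- a1^p
    rw [fJv_other n p j hj3 hjn 1 (by omega) (by omega) (by omega)]
    simp
  · -- a2^{p^m}
    by_cases hj2 : j = 3
    · have hfin : (⟨2, by omega⟩ : Fin (n+1)) = ⟨j - 1, by omega⟩ := Fin.ext (by simp [hj2])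
      rw [hfin, fJv_jm1 n p j hj3 hjn]
      exact hY m hm
    · rw [fJv_other n p j hj3 hjn 2 (by omega) (by omega) (by omega)]
      simp
  · -- ai^{p²}
    by_cases hi1 : i = j - 1
    · have hfin : (⟨i, by omega⟩ : Fin (n+1)) = ⟨j - 1, by omega⟩ := Fin.ext (by simp [hi1])
      rw [hfin, fJv_jm1 n p j hj3 hjn]
      exact hY 2 (by omega)
    · by_cases hi2 : i = j
      · have hfin : (⟨i, by omega⟩ : Fin (n+1)) = ⟨j, by omega⟩ := Fin.ext (by simp [hi2])
        rw [hfin, fJv_j n p j hj3 hjn]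
        rw [Heis.pow_eq _ (by simp)]
        refine Heis.ext ?_ ?_ ?_ <;> simp [ZMod.natCast_self]
      · rw [fJv_other n p j hj3 hjn i (by omega) (by omega) (by omega)]
        simp
  · -- a_{n-1}^p = a0^p
    rw [fJv_0 n p j]
    by_cases hc1 : j = n - 1
    · have hfin : (⟨n - 1, by omega⟩ : Fin (n+1)) = ⟨j, by omega⟩ := Fin.ext (by simp [hc1])
      rw [hfin, fJv_j n p j hj3 hjn, if_pos hc1]
      rw [Heis.pow_eq (⟨0,0,1⟩ : Heis p) (by simp) p, Heis.pow_eq (⟨1,0,1⟩ : Heis p) (by simp) p]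
      refine Heis.ext ?_ ?_ ?_ <;> simp [ZMod.natCast_self]
    · rw [if_neg hc1]
      by_cases hc2 : j = n
      · have hfin : (⟨n - 1, by omega⟩ : Fin (n+1)) = ⟨j - 1, by omega⟩ :=
          Fin.ext (by simp [hc2])
        rw [hfin, fJv_jm1 n p j hj3 hjn]
        rw [Heis.pow_eq (⟨0,1,0⟩ : Heis p) (by simp) p, Heis.pow_eq (⟨1,0,0⟩ : Heis p) (by simp) p]
        refine Heis.ext ?_ ?_ ?_ <;> simp [ZMod.natCast_self]
      · rw [fJv_other n p j hj3 hjn (n-1) (by omega) (by omega) (by omega)]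
        rw [Heis.pow_eq (⟨1,0,0⟩ : Heis p) (by simp) p]
        refine Heis.ext ?_ ?_ ?_ <;> simp [ZMod.natCast_self]
  · -- [a1,a0]
    rw [fJv_other n p j hj3 hjn 1 (by omega) (by omega) (by omega)]
    group
  · -- [an,a0] = a1
    rw [fJv_other n p j hj3 hjn 1 (by omega) (by omega) (by omega), fJv_0 n p j]
    by_cases hc2 : j = n
    · have hfin : (⟨n, by omega⟩ : Fin (n+1)) = ⟨j, by omega⟩ := Fin.ext (by simp [hc2])
      rw [hfin, fJv_j n p j hj3 hjn]
      have hcw : ((⟨0,0,1⟩ : Heis p))⁻¹ * (⟨1, 0, if j = n - 1 then 1 else 0⟩ : Heis p)⁻¹ *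
          ⟨0,0,1⟩ * ⟨1, 0, if j = n - 1 then 1 else 0⟩ = 1 := by
        rw [Heis.comm_formula]
        refine Heis.ext ?_ ?_ ?_ <;> simp
      rw [hcw]
      simp
    · rw [fJv_other n p j hj3 hjn n (by omega) (by omega) (by omega)]
      group
  · -- [a_{i-1},a0] = a_i^p
    rw [fJv_0 n p j]
    by_cases hc1 : i = j
    · have hfin1 : (⟨i - 1, by omega⟩ : Fin (n+1)) = ⟨j - 1, by omega⟩ :=
        Fin.ext (by simp [hc1])
      have hfin2 : (⟨i, by omega⟩ : Fin (n+1)) = ⟨j, by omega⟩ := Fin.ext (by simp [hc1])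
      rw [hfin1, hfin2, fJv_jm1 n p j hj3 hjn, fJv_j n p j hj3 hjn]
      have hcw : ((⟨0,1,0⟩ : Heis p))⁻¹ * (⟨1, 0, if j = n - 1 then 1 else 0⟩ : Heis p)⁻¹ *
          ⟨0,1,0⟩ * ⟨1, 0, if j = n - 1 then 1 else 0⟩ = ⟨0, 0, (p : ZMod (p ^ 2))⟩ := by
        rw [Heis.comm_formula]
        refine Heis.ext ?_ ?_ ?_ <;> simp
      rw [hcw, Heis.pow_eq (⟨0,0,1⟩ : Heis p) (by simp) p]
      refine Heis.ext ?_ ?_ ?_ <;> simp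
    · by_cases hc2 : i - 1 = j
      · have hfin1 : (⟨i - 1, by omega⟩ : Fin (n+1)) = ⟨j, by omega⟩ :=
          Fin.ext (by simp [hc2])
        rw [hfin1, fJv_j n p j hj3 hjn, fJv_other n p j hj3 hjn i (by omega) (by omega) (by omega)]
        have hcw : ((⟨0,0,1⟩ : Heis p))⁻¹ * (⟨1, 0, if j = n - 1 then 1 else 0⟩ : Heis p)⁻¹ *
            ⟨0,0,1⟩ * ⟨1, 0, if j = n - 1 then 1 else 0⟩ = 1 := by
          rw [Heis.comm_formula]
          refine Heis.ext ?_ ?_ ?_ <;> simp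
        rw [hcw]
        simp
      · rw [fJv_other n p j hj3 hjn (i - 1) (by omega) (by omega) (by omega)]
        have h1 : ((1 : Heis p))⁻¹ * (⟨1, 0, if j = n - 1 then 1 else 0⟩ : Heis p)⁻¹ * 1 *
            ⟨1, 0, if j = n - 1 then 1 else 0⟩ = 1 := by group
        rw [h1]
        by_cases hc3 : i = j - 1
        · have hfin : (⟨i, by omega⟩ : Fin (n+1)) = ⟨j - 1, by omega⟩ :=
            Fin.ext (by simp [hc3])
          rw [hfin, fJv_jm1 n p j hj3 hjn]
          have hYp : ((⟨0,1,0⟩ : Heis p)) ^ p = 1 := by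
            have := hY 1 le_rfl; rwa [pow_one] at this
          rw [hYp]
          simp
        · rw [fJv_other n p j hj3 hjn i (by omega) (by omega) (by omega)]
          simp
  · -- [ai,aj']
    exact Heis.comm_eq_one_of_x _ _ (fJv_x_zero n p j i (by omega) _)
      (fJv_x_zero n p j j' (by omega) _)

end FJ

/-- abelianized assignment detecting `a₂` -/
noncomputable def fabv : Fin (n + 1) → Multiplicative (ZMod (p ^ m)) := fun i =>
  Multiplicative.ofAdd (if (i : ℕ) = 2 then 1 else if (i : ℕ) = 0 ∧ n = 3 then 1 else 0)

lemma fabv_2 (h : 2 < n + 1) : fabv n m p ⟨2, h⟩ = Multiplicative.ofAdd 1 := by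
  simp [fabv]

lemma fabv_not2 (v : ℕ) (h2 : v ≠ 2) (hv : ¬(v = 0 ∧ n = 3)) (h : v < n + 1) :
    fabv n m p ⟨v, h⟩ = 1 := by
  simp only [fabv]
  rw [if_neg (by omega), if_neg (by exact hv)]
  rfl

lemma fabv_rels (hn : 3 ≤ n) :
    ∀ r ∈ GnmpRels n m p hn, FreeGroup.lift (fabv n m p) r = 1 := by
  intro r hr
  rw [mem_rels_iff] at hr
  rcases hr with h|h|⟨i,h3,hi,h⟩|h|h|h|⟨i,h3,hi,h⟩|⟨i,j',h1,hij,hj',h⟩ <;> subst h <;>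
    simp only [map_mul, map_inv, map_pow, FreeGroup.lift_apply_of]
  · rw [fabv_not2 n m p 1 (by omega) (by omega)]
    simp
  · rw [fabv_2 n m p]
    rw [← ofAdd_nsmul]
    simp [ZMod.natCast_self]
  · rw [fabv_not2 n m p i (by omega) (by omega)]
    simp
  · by_cases h3 : n = 3
    · have hfin : (⟨n - 1, by omega⟩ : Fin (n+1)) = ⟨2, by omega⟩ := Fin.ext (by simp [h3])
      rw [hfin, fabv_2 n m p]
      have h0 : fabv n m p ⟨0, by omega⟩ = Multiplicative.ofAdd 1 := by
        simp only [fabv]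
        rw [if_neg (by omega), if_pos (by simp [h3])]
      rw [h0]
      simp
    · rw [fabv_not2 n m p (n - 1) (by omega) (by omega), fabv_not2 n m p 0 (by omega) (by omega)]
      simp
  · exact comm_word (mul_comm _ _)
  · rw [fabv_not2 n m p 1 (by omega) (by omega)]
    rw [comm_word (mul_comm _ _)]
    simp
  · rw [fabv_not2 n m p i (by omega) (by omega)]
    rw [comm_word (mul_comm _ _)]
    simp
  · exact comm_word (mul_comm _ _)

end Homs

section Consequences

variable (n m p : ℕ) (hn : 3 ≤ n) (hm : 2 ≤ m)

lemma p_dvd_of_cast (hp : p.Prime) (c : ℤ)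
    (h : (c : ZMod (p ^ 2)) * (p : ZMod (p ^ 2)) = 0) : (p : ℤ) ∣ c := by
  have h2 : (((c * (p : ℕ) : ℤ)) : ZMod (p ^ 2)) = 0 := by push_cast; exact h
  have hd := (ZMod.intCast_zmod_eq_zero_iff_dvd _ _).mp h2
  have hd2 : (p : ℤ) * (p : ℤ) ∣ c * (p : ℕ) := by
    push_cast at hd ⊢
    rwa [pow_two] at hd
  obtain ⟨k, hk⟩ := hd2
  have hpne : (p : ℤ) ≠ 0 := Int.natCast_ne_zero.mpr hp.pos.ne'
  refine ⟨k, ?_⟩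
  apply mul_right_cancel₀ hpne
  push_cast at hk ⊢
  linear_combination hk

noncomputable def F1h : PresentedGroup (GnmpRels n m p hn) →* Heis p :=
  PresentedGroup.toGroup (f1v_rels n m p hn (by omega))

lemma F1h_of (i : Fin (n + 1)) :
    F1h n m p hn hm (PresentedGroup.of i) = f1v n p i := PresentedGroup.toGroup.of _

noncomputable def FJh (j : ℕ) (hj3 : 3 ≤ j) (hjn : j ≤ n) :
    PresentedGroup (GnmpRels n m p hn) →* Heis p :=
  PresentedGroup.toGroup (fJv_rels n m p j hj3 hjn hn (by omega))

lemma FJh_of (j : ℕ) (hj3 : 3 ≤ j) (hjn : j ≤ n) (i : Fin (n + 1)) :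
    FJh n m p hn hm j hj3 hjn (PresentedGroup.of i) = fJv n p j i := PresentedGroup.toGroup.of _

noncomputable def Fab : PresentedGroup (GnmpRels n m p hn) →* Multiplicative (ZMod (p ^ m)) :=
  PresentedGroup.toGroup (fabv_rels n m p hn)

lemma Fab_of (i : Fin (n + 1)) :
    Fab n m p hn (PresentedGroup.of i) = fabv n m p i := PresentedGroup.toGroup.of _

lemma cel_zpow_z (c : ℤ) :
    (((⟨0, 0, (p : ZMod (p ^ 2))⟩ : Heis p)) ^ c).z = (c : ZMod (p ^ 2)) * p := by
  rw [Heis.zpow_eq _ (by simp)]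

lemma A1_detect (hm : 2 ≤ m) (hp : p.Prime) (c : ℤ) (h : (A n m p hn ⟨1, by omega⟩) ^ c = 1) : (p : ℤ) ∣ c := by
  have h2 := congrArg (F1h n m p hn hm) h
  rw [map_zpow, map_one, F1h_of, f1v_1 n p hn] at h2
  have h3 := congrArg Heis.z h2
  rw [cel_zpow_z] at h3
  simp only [Heis.one_z] at h3
  exact p_dvd_of_cast p hp c h3

lemma A1_ne_one (hm : 2 ≤ m) (hp : p.Prime) : A n m p hn ⟨1, by omega⟩ ≠ 1 := by
  intro h
  have h2 := congrArg (F1h n m p hn hm) h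
  rw [map_one, F1h_of, f1v_1 n p hn] at h2
  have h3 := congrArg Heis.z h2
  simp only [Heis.one_z] at h3
  rw [ZMod.natCast_eq_zero_iff] at h3
  have h4 := Nat.le_of_dvd hp.pos h3
  nlinarith [hp.two_le]

lemma AJ_detect (hm : 2 ≤ m) (hp : p.Prime) (j : ℕ) (hj3 : 3 ≤ j) (hjn : j ≤ n) (c : ℤ)
    (h : ((A n m p hn ⟨j, by omega⟩) ^ p) ^ c = 1) : (p : ℤ) ∣ c := by
  have h2 := congrArg (FJh n m p hn hm j hj3 hjn) h
  rw [map_zpow, map_pow, map_one, FJh_of, fJv_j n p j hj3 hjn,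
    Heis.pow_eq _ (by simp)] at h2
  have hsimp : ((p : ZMod p) * 0, (p : ZMod p) * 0, (p : ZMod (p ^ 2)) * 1) = 
    ((0 : ZMod p), (0 : ZMod p), (p : ZMod (p ^ 2))) := by simp
  have h2' : ((⟨0, 0, (p : ZMod (p ^ 2))⟩ : Heis p)) ^ c = 1 := by
    rw [← h2]
    congr 1
    refine Heis.ext ?_ ?_ ?_ <;> simp
  have h3 := congrArg Heis.z h2'
  rw [cel_zpow_z] at h3
  simp only [Heis.one_z] at h3
  exact p_dvd_of_cast p hp c h3

lemma A1_eq_commutator :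
    ⁅(A n m p hn ⟨n, by omega⟩)⁻¹, (A n m p hn ⟨0, by omega⟩)⁻¹⁆ = A n m p hn ⟨1, by omega⟩ := by
  rw [commutatorElement_def, inv_inv, inv_inv]
  exact rel6 n m p hn

lemma A1_mem_commutator :
    A n m p hn ⟨1, by omega⟩ ∈ commutator (PresentedGroup (GnmpRels n m p hn)) := by
  rw [← A1_eq_commutator n m p hn, commutator_def]
  exact Subgroup.commutator_mem_commutator (Subgroup.mem_top _) (Subgroup.mem_top _)

lemma claim4 (hm : 2 ≤ m) (hp : p.Prime) : commutator (PresentedGroup (GnmpRels n m p hn)) ≠ ⊥ := by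
  intro hbot
  have h1 := A1_mem_commutator n m p hn
  rw [hbot, Subgroup.mem_bot] at h1
  exact A1_ne_one n m p hn hm hp h1

lemma claim2 (hm : 2 ≤ m) (hp : p.Prime) :
    Subgroup.closure {(A n m p hn ⟨2, Nat.lt_succ_of_le (by omega)⟩) ^ p} ⊓
      commutator (PresentedGroup (GnmpRels n m p hn)) = ⊥ := by
  rw [eq_bot_iff]
  intro g hg
  obtain ⟨hg1, hg2⟩ := Subgroup.mem_inf.mp hg
  obtain ⟨k, hk⟩ := Subgroup.mem_closure_singleton.mp hg1
  have hker : commutator (PresentedGroup (GnmpRels n m p hn)) ≤ (Fab n m p hn).ker := by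
    rw [commutator_def]
    refine Subgroup.commutator_le.mpr fun a _ b _ => ?_
    rw [MonoidHom.mem_ker, map_commutatorElement]
    exact commutatorElement_eq_one_iff_commute.mpr (mul_comm _ _)
  have hg0 : Fab n m p hn g = 1 := hker hg2
  rw [← hk, map_zpow, map_pow, Fab_of, fabv_2 n m p] at hg0
  -- hg0 : ((ofAdd 1)^p)^k = 1
  rw [← ofAdd_nsmul, ← ofAdd_zsmul] at hg0
  have hadd : (k • (p • (1 : ZMod (p ^ m)))) = 0 := by
    have := congrArg Multiplicative.toAdd hg0
    simpa using this
  have hcast : (((k * (p : ℕ) : ℤ)) : ZMod (p ^ m)) = 0 := by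
    push_cast
    rw [zsmul_eq_mul, nsmul_eq_mul, mul_one] at hadd
    push_cast at hadd
    exact hadd
  have hd := (ZMod.intCast_zmod_eq_zero_iff_dvd _ _).mp hcast
  -- (p^m : ℤ) ∣ k * p
  have hpne : (p : ℤ) ≠ 0 := Int.natCast_ne_zero.mpr hp.pos.ne'
  have hd2 : ((p ^ (m - 1) : ℕ) : ℤ) ∣ k := by
    obtain ⟨t, ht⟩ := hd
    push_cast at ht
    have hm1 : (p : ℤ) ^ m = (p : ℤ) ^ (m - 1) * p := by
      rw [← pow_succ]
      congr 1
      omega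
    refine ⟨t, ?_⟩
    apply mul_right_cancel₀ hpne
    push_cast
    rw [ht, hm1]
    ring
  obtain ⟨t, ht⟩ := hd2
  rw [Subgroup.mem_bot, ← hk, ht, zpow_mul, zpow_natCast, ← pow_mul]
  have hpm : p * p ^ (m - 1) = p ^ m := by
    rw [← pow_succ']
    congr 1
    omega
  rw [hpm, rel2 n m p hn, one_zpow]

end Consequences

section CenterLe

variable (n m p : ℕ) (hn : 3 ≤ n)

lemma conj_zpow' {G : Type*} [Group G] (t u : G) (c : ℤ) :
    t⁻¹ * u ^ c * t = (t⁻¹ * u * t) ^ c := by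
  cases c with
  | ofNat d => rw [Int.ofNat_eq_coe, zpow_natCast, zpow_natCast]; exact conj_pow' t u d
  | negSucc d =>
    rw [zpow_negSucc, zpow_negSucc, ← conj_pow']
    group

lemma conj_list_prod {G : Type*} [Group G] (t : G) {ι : Type*} (l : List ι) (u : ι → G) :
    t⁻¹ * (l.map u).prod * t = (l.map fun i => t⁻¹ * u i * t).prod := by
  induction l with
  | nil => simp
  | cons a tl ih =>
    simp only [List.map_cons, List.prod_cons]
    rw [← ih]
    group

lemma cel_detect (hp : p.Prime) (c : ℤ)
    (h : ((⟨0, 0, (p : ZMod (p ^ 2))⟩ : Heis p)) ^ c = 1) : (p : ℤ) ∣ c := by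
  have h3 := congrArg Heis.z h
  rw [cel_zpow_z] at h3
  simp only [Heis.one_z] at h3
  exact p_dvd_of_cast p hp c h3

lemma zel_pow_p : ((⟨0, 0, 1⟩ : Heis p)) ^ p = ⟨0, 0, (p : ZMod (p ^ 2))⟩ := by
  rw [Heis.pow_eq _ (by simp)]
  refine Heis.ext ?_ ?_ ?_ <;> simp

lemma pow_p_mem (hm : 2 ≤ m) (v : ℕ) (hv : v ≤ n) (hv1 : v ≠ 1) :
    (A n m p hn ⟨v, by omega⟩) ^ p ∈
      Subgroup.closure {(A n m p hn ⟨2, Nat.lt_succ_of_le (by omega)⟩) ^ p} ⊔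
        commutator (PresentedGroup (GnmpRels n m p hn)) := by
  have hcomm_le : commutator (PresentedGroup (GnmpRels n m p hn)) ≤
      Subgroup.closure {(A n m p hn ⟨2, by omega⟩) ^ p} ⊔
        commutator (PresentedGroup (GnmpRels n m p hn)) := le_sup_right
  have h2mem : (A n m p hn ⟨2, by omega⟩) ^ p ∈
      Subgroup.closure {(A n m p hn ⟨2, by omega⟩) ^ p} ⊔
        commutator (PresentedGroup (GnmpRels n m p hn)) :=
    Subgroup.mem_sup_left (Subgroup.subset_closure (Set.mem_singleton _))
  have hrel7mem : ∀ u : ℕ, ∀ (h3 : 3 ≤ u) (hu : u ≤ n),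
      (A n m p hn ⟨u, Nat.lt_succ_of_le hu⟩) ^ p ∈
        Subgroup.closure {(A n m p hn ⟨2, by omega⟩) ^ p} ⊔
          commutator (PresentedGroup (GnmpRels n m p hn)) := by
    intro u h3 hu
    have h1 : ⁅(A n m p hn ⟨u - 1, by omega⟩)⁻¹, (A n m p hn ⟨0, by omega⟩)⁻¹⁆ =
        (A n m p hn ⟨u, by omega⟩) ^ p := by
      rw [commutatorElement_def, inv_inv, inv_inv]
      exact rel7 n m p hn u h3 hu
    rw [← h1]
    refine hcomm_le ?_
    rw [commutator_def]
    exact Subgroup.commutator_mem_commutator (Subgroup.mem_top _) (Subgroup.mem_top _)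
  by_cases h0 : v = 0
  · subst h0
    rw [show (⟨0, by omega⟩ : Fin (n+1)) = ⟨0, by omega⟩ from rfl, ← rel4 n m p hn]
    by_cases h3 : n = 3
    · have hfin : (⟨n - 1, by omega⟩ : Fin (n+1)) = ⟨2, by omega⟩ := Fin.ext (by simp [h3])
      rw [hfin]
      exact h2mem
    · exact hrel7mem (n - 1) (by omega) (by omega)
  · by_cases h2 : v = 2
    · subst h2
      exact h2mem
    · exact hrel7mem v (by omega) hv

lemma center_le (hm : 2 ≤ m) (hp : p.Prime) :
    Subgroup.center (PresentedGroup (GnmpRels n m p hn)) ≤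
      Subgroup.closure {(A n m p hn ⟨2, Nat.lt_succ_of_le (by omega)⟩) ^ p} ⊔
        commutator (PresentedGroup (GnmpRels n m p hn)) := by
  intro g hg
  set H := Subgroup.closure {(A n m p hn ⟨2, by omega⟩) ^ p} ⊔
    commutator (PresentedGroup (GnmpRels n m p hn)) with hHdef
  have hHle : H ≤ Subgroup.center (PresentedGroup (GnmpRels n m p hn)) := by
    apply sup_le
    · rw [Subgroup.closure_le]
      intro y hy
      rw [Set.mem_singleton_iff] at hy
      subst hy
      exact central_pow n m p hn 2 le_rfl (by omega)
    · exact commutator_le_center n m p hn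
  haveI hnorm : H.Normal := by
    constructor
    intro h hh g'
    have hc := Subgroup.mem_center_iff.mp (hHle hh) g'
    have he : g' * h * g'⁻¹ = h := by rw [hc]; group
    rw [he]; exact hh
  have hcommQ : ∀ a b : PresentedGroup (GnmpRels n m p hn) ⧸ H, a * b = b * a := by
    intro a b
    obtain ⟨u, rfl⟩ := QuotientGroup.mk'_surjective H a
    obtain ⟨v, rfl⟩ := QuotientGroup.mk'_surjective H b
    have hmem : (u * v) * (v * u)⁻¹ ∈ H := by
      have h1 : ⁅u, v⁆ ∈ commutator (PresentedGroup (GnmpRels n m p hn)) := by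
        rw [commutator_def]
        exact Subgroup.commutator_mem_commutator (Subgroup.mem_top _) (Subgroup.mem_top _)
      have h2 : (u * v) * (v * u)⁻¹ = ⁅u, v⁆ := by rw [commutatorElement_def]; group
      rw [h2]; exact Subgroup.mem_sup_right h1
    have h3 : QuotientGroup.mk' H ((u * v) * (v * u)⁻¹) = 1 :=
      (QuotientGroup.eq_one_iff _).mpr hmem
    rw [map_mul, map_inv] at h3
    have h4 := mul_inv_eq_one.mp h3
    simpa [map_mul] using h4
  letI : CommGroup (PresentedGroup (GnmpRels n m p hn) ⧸ H) :=
    { (inferInstance : Group (PresentedGroup (GnmpRels n m p hn) ⧸ H)) with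
      mul_comm := hcommQ }
  set π := QuotientGroup.mk' H with hπdef
  have hgen : ∀ q : PresentedGroup (GnmpRels n m p hn) ⧸ H,
      ∃ x : Fin (n+1) → ℤ, q = ∏ i, (π (PresentedGroup.of i)) ^ (x i) := by
    intro q
    have hq : q ∈ Subgroup.closure
        (Set.range fun i : Fin (n+1) => π (PresentedGroup.of i)) := by
      have h1 : (Set.range fun i : Fin (n+1) => π (PresentedGroup.of i)) =
          ⇑π '' (Set.range (PresentedGroup.of :
            Fin (n+1) → PresentedGroup (GnmpRels n m p hn))) := Set.range_comp _ _
      rw [h1, ← MonoidHom.map_closure, PresentedGroup.closure_range_of,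
        ← MonoidHom.range_eq_map, MonoidHom.range_eq_top.mpr (QuotientGroup.mk'_surjective H)]
      trivial
    induction hq using Subgroup.closure_induction with
    | mem s hs =>
      obtain ⟨i, rfl⟩ := hs
      refine ⟨fun j => if j = i then 1 else 0, ?_⟩
      rw [Finset.prod_eq_single i]
      · simp
      · intro b _ hb; simp [hb]
      · intro hi; exact absurd (Finset.mem_univ i) hi
    | one => exact ⟨0, by simp⟩
    | mul a b _ _ ha hb =>
      obtain ⟨x, rfl⟩ := ha
      obtain ⟨y, rfl⟩ := hb
      exact ⟨x + y, by simp [zpow_add, Finset.prod_mul_distrib]⟩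
    | inv a _ ha =>
      obtain ⟨x, rfl⟩ := ha
      exact ⟨-x, by simp [zpow_neg]⟩
  obtain ⟨x, hx⟩ := hgen (π g)
  set l := List.finRange (n + 1) with hl
  set w : PresentedGroup (GnmpRels n m p hn) :=
    (l.map fun i => (PresentedGroup.of i) ^ (x i)).prod with hwdef
  have hπw : π w = π g := by
    rw [hwdef, map_list_prod, List.map_map]
    rw [show (⇑π ∘ fun i => PresentedGroup.of i ^ x i) =
        fun i : Fin (n+1) => (π (PresentedGroup.of i)) ^ x i from
      funext fun i => by simp]
    rw [hx, Fin.prod_univ_def]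
  have hwH : w⁻¹ * g ∈ H := by
    have h1 : π (w⁻¹ * g) = 1 := by rw [map_mul, map_inv, hπw]; group
    exact (QuotientGroup.eq_one_iff _).mp h1
  have hwZ : w ∈ Subgroup.center (PresentedGroup (GnmpRels n m p hn)) := by
    have h1 : w = g * (w⁻¹ * g)⁻¹ := by group
    rw [h1]
    exact Subgroup.mul_mem _ hg (Subgroup.inv_mem _ (hHle hwH))
  classical
  -- corrections under conjugation by a₀
  set corr0 : Fin (n+1) → PresentedGroup (GnmpRels n m p hn) := fun i =>
    if (i : ℕ) = n then (A n m p hn ⟨1, by omega⟩) ^ (x i)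
    else if h2 : 2 ≤ (i : ℕ) ∧ (i : ℕ) ≤ n - 1 then
      ((A n m p hn ⟨(i : ℕ) + 1, by omega⟩) ^ p) ^ (x i)
    else 1 with hcorr0
  have hcorr0_n : corr0 ⟨n, by omega⟩ = (A n m p hn ⟨1, by omega⟩) ^ (x ⟨n, by omega⟩) := by
    simp only [hcorr0]
    simp
  have hcorr0_mid : ∀ v (h2 : 2 ≤ v) (h3 : v ≤ n - 1),
      corr0 ⟨v, by omega⟩ =
        ((A n m p hn ⟨v + 1, by omega⟩) ^ p) ^ (x ⟨v, by omega⟩) := by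
    intro v h2 h3
    simp only [hcorr0]
    rw [if_neg (by omega), dif_pos (by exact ⟨h2, h3⟩)]
  have hcorr0_low : ∀ v (hv : v < 2) (h : v < n + 1), corr0 ⟨v, h⟩ = 1 := by
    intro v hv h
    simp only [hcorr0]
    rw [if_neg (by omega), dif_neg (by omega)]
  have hcorr0_central : ∀ i, corr0 i ∈
      Subgroup.center (PresentedGroup (GnmpRels n m p hn)) := by
    intro i
    simp only [hcorr0]
    by_cases h1 : (i : ℕ) = n
    · rw [if_pos h1]
      exact Subgroup.zpow_mem _ (central_A1 n m p hn) _
    · rw [if_neg h1]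
      by_cases h2 : 2 ≤ (i : ℕ) ∧ (i : ℕ) ≤ n - 1
      · rw [dif_pos h2]
        exact Subgroup.zpow_mem _
          (central_pow n m p hn ((i : ℕ) + 1) (by omega) (by omega)) _
      · rw [dif_neg h2]
        exact Subgroup.one_mem _
  have hconj0 : ∀ i : Fin (n+1),
      (A n m p hn ⟨0, by omega⟩)⁻¹ * ((PresentedGroup.of i) ^ (x i)) *
        A n m p hn ⟨0, by omega⟩ = (PresentedGroup.of i) ^ (x i) * corr0 i := by
    intro i
    have hival : i = (⟨(i : ℕ), i.isLt⟩ : Fin (n+1)) := rfl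
    rw [conj_zpow']
    by_cases h1 : (i : ℕ) = n
    · have hfin : i = (⟨n, by omega⟩ : Fin (n+1)) := Fin.ext h1
      rw [hfin]
      rw [show (PresentedGroup.of (⟨n, by omega⟩ : Fin (n+1)) :
          PresentedGroup (GnmpRels n m p hn)) = A n m p hn ⟨n, by omega⟩ from rfl]
      rw [conj_top n m p hn, hcorr0_n]
      have hcomm : Commute (A n m p hn ⟨n, by omega⟩) (A n m p hn ⟨1, by omega⟩) :=
        commute_pos n m p hn n 1 (by omega) (by omega) (by omega) (by omega)
      exact hcomm.mul_zpow _
    · by_cases h2 : 2 ≤ (i : ℕ) ∧ (i : ℕ) ≤ n - 1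
      · have hfin : i = (⟨(i : ℕ), by omega⟩ : Fin (n+1)) := rfl
        rw [hfin, show (PresentedGroup.of (⟨(i : ℕ), by omega⟩ : Fin (n+1)) :
            PresentedGroup (GnmpRels n m p hn)) = A n m p hn ⟨(i : ℕ), by omega⟩ from rfl,
          conj_mid n m p hn (i : ℕ) h2.1 h2.2, hcorr0_mid (i : ℕ) h2.1 h2.2]
        have hcomm : Commute (A n m p hn ⟨(i : ℕ), by omega⟩)
            ((A n m p hn ⟨(i : ℕ) + 1, by omega⟩) ^ p) :=
          Subgroup.mem_center_iff.mp
            (central_pow n m p hn ((i : ℕ) + 1) (by omega) (by omega)) _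
        exact hcomm.mul_zpow _
      · -- (i : ℕ) = 0 or 1
        have hlow : (i : ℕ) < 2 := by omega
        have hc0 : corr0 i = 1 := by
          rw [show i = (⟨(i : ℕ), i.isLt⟩ : Fin (n+1)) from rfl]
          exact hcorr0_low (i : ℕ) hlow i.isLt
        rw [hc0, mul_one]
        by_cases h0 : (i : ℕ) = 0
        · have hfin : i = (⟨0, by omega⟩ : Fin (n+1)) := Fin.ext h0
          rw [hfin]
          congr 1
          group
        · have hfin : i = (⟨1, by omega⟩ : Fin (n+1)) := Fin.ext (by show (i : ℕ) = 1; omega)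
          rw [hfin]
          congr 1
          have h5 := rel5 n m p hn
          rw [mul_assoc, h5]
          exact inv_mul_cancel_left _ _
  have hkey0 : (l.map corr0).prod = 1 := by
    have h1 : (A n m p hn ⟨0, by omega⟩)⁻¹ * w * A n m p hn ⟨0, by omega⟩ = w := by
      have hc := Subgroup.mem_center_iff.mp hwZ (A n m p hn ⟨0, by omega⟩)
      rw [mul_assoc, ← hc]
      exact inv_mul_cancel_left _ _
    have h2 := conj_list_prod (A n m p hn ⟨0, by omega⟩) l
      (fun i => (PresentedGroup.of i) ^ (x i))
    rw [← hwdef, h1] at h2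
    rw [List.map_congr_left (fun i _ => hconj0 i)] at h2
    rw [list_prod_mul_central l _ corr0 hcorr0_central, ← hwdef] at h2
    exact left_eq_mul.mp h2
  -- corrections under conjugation by aₙ
  set corrn : Fin (n+1) → PresentedGroup (GnmpRels n m p hn) := fun i =>
    if (i : ℕ) = 0 then (A n m p hn ⟨1, by omega⟩) ^ (-(x i)) else 1 with hcorrn
  have hcorrn_0 : corrn ⟨0, by omega⟩ =
      (A n m p hn ⟨1, by omega⟩) ^ (-(x ⟨0, by omega⟩)) := by
    simp only [hcorrn]
    simp
  have hcorrn_pos : ∀ v (hv : 1 ≤ v) (h : v < n + 1), corrn ⟨v, h⟩ = 1 := by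
    intro v hv h
    simp only [hcorrn]
    rw [if_neg (by omega)]
  have hcorrn_central : ∀ i, corrn i ∈
      Subgroup.center (PresentedGroup (GnmpRels n m p hn)) := by
    intro i
    simp only [hcorrn]
    by_cases h1 : (i : ℕ) = 0
    · rw [if_pos h1]
      exact Subgroup.zpow_mem _ (central_A1 n m p hn) _
    · rw [if_neg h1]
      exact Subgroup.one_mem _
  have hconjn : ∀ i : Fin (n+1),
      (A n m p hn ⟨n, by omega⟩)⁻¹ * ((PresentedGroup.of i) ^ (x i)) *
        A n m p hn ⟨n, by omega⟩ = (PresentedGroup.of i) ^ (x i) * corrn i := by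
    intro i
    rw [conj_zpow']
    by_cases h0 : (i : ℕ) = 0
    · have hfin : i = (⟨0, by omega⟩ : Fin (n+1)) := Fin.ext h0
      rw [hfin]
      rw [show (PresentedGroup.of (⟨0, by omega⟩ : Fin (n+1)) :
          PresentedGroup (GnmpRels n m p hn)) = A n m p hn ⟨0, by omega⟩ from rfl,
        conj_zero_by_top n m p hn, hcorrn_0]
      have hc1 : Commute (A n m p hn ⟨0, by omega⟩) ((A n m p hn ⟨1, by omega⟩)⁻¹) :=
        Subgroup.mem_center_iff.mp (Subgroup.inv_mem _ (central_A1 n m p hn)) _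
      rw [hc1.mul_zpow, inv_zpow']
    · have hfin : i = (⟨(i : ℕ), i.isLt⟩ : Fin (n+1)) := rfl
      have hcn : corrn i = 1 := by
        rw [hfin]
        exact hcorrn_pos (i : ℕ) (by omega) i.isLt
      rw [hcn, mul_one]
      congr 1
      have hcomm := commute_pos n m p hn (i : ℕ) n (by omega) (by omega) (by omega) (by omega)
      rw [hfin, mul_assoc]
      rw [show A n m p hn ⟨(i : ℕ), by omega⟩ * A n m p hn ⟨n, by omega⟩ =
          A n m p hn ⟨n, by omega⟩ * A n m p hn ⟨(i : ℕ), by omega⟩ from hcomm]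
      exact inv_mul_cancel_left _ _
  have hkeyn : (l.map corrn).prod = 1 := by
    have h1 : (A n m p hn ⟨n, by omega⟩)⁻¹ * w * A n m p hn ⟨n, by omega⟩ = w := by
      have hc := Subgroup.mem_center_iff.mp hwZ (A n m p hn ⟨n, by omega⟩)
      rw [mul_assoc, ← hc]
      exact inv_mul_cancel_left _ _
    have h2 := conj_list_prod (A n m p hn ⟨n, by omega⟩) l
      (fun i => (PresentedGroup.of i) ^ (x i))
    rw [← hwdef, h1] at h2
    rw [List.map_congr_left (fun i _ => hconjn i)] at h2
    rw [list_prod_mul_central l _ corrn hcorrn_central, ← hwdef] at h2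
    exact left_eq_mul.mp h2
  -- detection scheme
  have hdet : ∀ (c : Fin (n+1) → PresentedGroup (GnmpRels n m p hn)),
      (l.map c).prod = 1 → ∀ (φ : PresentedGroup (GnmpRels n m p hn) →* Heis p)
      (i₀ : Fin (n+1)), (∀ i : Fin (n+1), i ≠ i₀ → φ (c i) = 1) → φ (c i₀) = 1 := by
    intro c hc φ i₀ hother
    have h1 := congrArg φ hc
    rw [map_one, map_list_prod, List.map_map] at h1
    have h2 := list_prod_eq_single l (⇑φ ∘ c) i₀
      (fun i _ hne => hother i hne) (List.nodup_finRange _)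
    rw [h2.1 (List.mem_finRange i₀)] at h1
    exact h1
  -- p ∣ x i for the relevant coordinates
  have hdvd_n : (p : ℤ) ∣ x ⟨n, by omega⟩ := by
    have h1 := hdet corr0 hkey0 (F1h n m p hn hm) ⟨n, by omega⟩ ?_
    · rw [hcorr0_n, map_zpow, F1h_of, f1v_1 n p hn] at h1
      exact cel_detect p hp _ h1
    · intro i hne
      by_cases h2 : 2 ≤ (i : ℕ) ∧ (i : ℕ) ≤ n - 1
      · rw [show i = (⟨(i : ℕ), i.isLt⟩ : Fin (n+1)) from rfl,
          hcorr0_mid (i : ℕ) h2.1 h2.2, map_zpow, map_pow, F1h_of]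
        by_cases h3 : (i : ℕ) + 1 = n
        · have hfin2 : (⟨(i : ℕ) + 1, by omega⟩ : Fin (n+1)) = ⟨n, by omega⟩ :=
            Fin.ext (by simp [h3])
          rw [hfin2, f1v_n n p hn]
          rw [Heis.pow_eq _ (by simp)]
          rw [show ((⟨((p : ℕ) : ZMod p) * 0, ((p : ℕ) : ZMod p) * 1,
            ((p : ℕ) : ZMod (p ^ 2)) * 0⟩ : Heis p)) = 1 from by
              refine Heis.ext ?_ ?_ ?_ <;> simp [ZMod.natCast_self]]
          exact one_zpow _
        · rw [f1v_mid n p ((i : ℕ) + 1) (by omega) (by omega) h3]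
          simp
      · have hlow : (i : ℕ) < 2 ∨ (i : ℕ) = n := by omega
        rcases hlow with hlow | hlow
        · rw [show i = (⟨(i : ℕ), i.isLt⟩ : Fin (n+1)) from rfl,
            hcorr0_low (i : ℕ) hlow i.isLt, map_one]
        · exact absurd (Fin.ext hlow : i = ⟨n, by omega⟩) hne
  have hdvd_mid : ∀ v (hv2 : 2 ≤ v) (hv3 : v ≤ n - 1),
      (p : ℤ) ∣ x ⟨v, Nat.lt_succ_of_le (hv3.trans (Nat.sub_le n 1))⟩ := by
    intro v hv2 hv3
    have h1 := hdet corr0 hkey0 (FJh n m p hn hm (v + 1) (by omega) (by omega))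
      ⟨v, by omega⟩ ?_
    · rw [hcorr0_mid v hv2 hv3, map_zpow, map_pow, FJh_of,
        fJv_j n p (v + 1) (by omega) (by omega), zel_pow_p] at h1
      exact cel_detect p hp _ h1
    · intro i hne
      by_cases h2 : 2 ≤ (i : ℕ) ∧ (i : ℕ) ≤ n - 1
      · rw [show i = (⟨(i : ℕ), i.isLt⟩ : Fin (n+1)) from rfl,
          hcorr0_mid (i : ℕ) h2.1 h2.2, map_zpow, map_pow, FJh_of]
        by_cases h3 : (i : ℕ) + 1 = v
        · have hfin2 : (⟨(i : ℕ) + 1, by omega⟩ : Fin (n+1)) = ⟨(v + 1) - 1, by omega⟩ :=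
            Fin.ext (by simp; omega)
          rw [hfin2, fJv_jm1 n p (v + 1) (by omega) (by omega)]
          rw [Heis.pow_eq _ (by simp)]
          rw [show ((⟨((p : ℕ) : ZMod p) * 0, ((p : ℕ) : ZMod p) * 1,
            ((p : ℕ) : ZMod (p ^ 2)) * 0⟩ : Heis p)) = 1 from by
              refine Heis.ext ?_ ?_ ?_ <;> simp [ZMod.natCast_self]]
          exact one_zpow _
        · have h4 : (i : ℕ) + 1 ≠ v + 1 := by
            intro hcon
            exact hne (Fin.ext (by show (i : ℕ) = v; omega))
          rw [fJv_other n p (v + 1) (by omega) (by omega) ((i : ℕ) + 1) (by omega)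
            (by omega) h4]
          simp
      · have hlow : (i : ℕ) < 2 ∨ (i : ℕ) = n := by omega
        rcases hlow with hlow | hlow
        · rw [show i = (⟨(i : ℕ), i.isLt⟩ : Fin (n+1)) from rfl,
            hcorr0_low (i : ℕ) hlow i.isLt, map_one]
        · have hfin : i = (⟨n, by omega⟩ : Fin (n+1)) := Fin.ext hlow
          rw [hfin]
          rw [hcorr0_n, map_zpow, FJh_of,
            fJv_other n p (v + 1) (by omega) (by omega) 1 (by omega) (by omega) (by omega)]
          simp
  have hdvd_0 : (p : ℤ) ∣ x ⟨0, by omega⟩ := by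
    have h1 := hdet corrn hkeyn (F1h n m p hn hm) ⟨0, by omega⟩ ?_
    · rw [hcorrn_0, map_zpow, F1h_of, f1v_1 n p hn] at h1
      have := cel_detect p hp _ h1
      rwa [dvd_neg] at this
    · intro i hne
      have hpos : 1 ≤ (i : ℕ) := by
        by_contra hcon
        exact hne (Fin.ext (by show (i : ℕ) = 0; omega))
      rw [show i = (⟨(i : ℕ), i.isLt⟩ : Fin (n+1)) from rfl,
        hcorrn_pos (i : ℕ) hpos i.isLt, map_one]
  -- conclude
  have hfinal : π g = 1 := by
    rw [hx]
    apply Finset.prod_eq_one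
    intro i _
    by_cases h1 : (i : ℕ) = 1
    · have hfin : i = (⟨1, by omega⟩ : Fin (n+1)) := Fin.ext h1
      rw [hfin]
      have hA1H : π (A n m p hn ⟨1, by omega⟩) = 1 :=
        (QuotientGroup.eq_one_iff _).mpr (Subgroup.mem_sup_right (A1_mem_commutator n m p hn))
      rw [show (PresentedGroup.of (⟨1, by omega⟩ : Fin (n+1)) :
        PresentedGroup (GnmpRels n m p hn)) = A n m p hn ⟨1, by omega⟩ from rfl, hA1H, one_zpow]
    · have hdvd : (p : ℤ) ∣ x i := by
        by_cases h0 : (i : ℕ) = 0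
        · have hfin : i = (⟨0, by omega⟩ : Fin (n+1)) := Fin.ext h0
          rw [hfin]
          exact hdvd_0
        · by_cases hn2 : (i : ℕ) = n
          · have hfin : i = (⟨n, by omega⟩ : Fin (n+1)) := Fin.ext hn2
            rw [hfin]
            exact hdvd_n
          · have hfin : i = (⟨(i : ℕ), by omega⟩ : Fin (n+1)) := rfl
            rw [hfin]
            exact hdvd_mid (i : ℕ) (by omega) (by omega)
      obtain ⟨c, hc⟩ := hdvd
      have hpH : (PresentedGroup.of i) ^ p ∈ H := by
        rw [show i = (⟨(i : ℕ), i.isLt⟩ : Fin (n+1)) from rfl]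
        exact pow_p_mem n m p hn hm (i : ℕ) (by omega) h1
      have hπp : (π (PresentedGroup.of i)) ^ (p : ℤ) = 1 := by
        rw [zpow_natCast, ← map_pow]
        exact (QuotientGroup.eq_one_iff _).mpr hpH
      rw [hc, zpow_mul, hπp, one_zpow]
  exact (QuotientGroup.eq_one_iff _).mp hfinal

end CenterLe

end Gnmp

/-- For `G = G_n(m,p)`: the center is the internal direct product
`Z(G) = ⟨a₂ᵖ⟩ × G'`, and `G` is nilpotent of class exactly 2. -/
theorem center_Gnmp (n m p : ℕ) (hp : p.Prime) (hm : 2 ≤ m) (hn : 3 ≤ n) :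
    Subgroup.center (PresentedGroup (GnmpRels n m p hn)) =
      Subgroup.closure {(PresentedGroup.of ⟨2, by omega⟩ :
          PresentedGroup (GnmpRels n m p hn)) ^ p} ⊔
        commutator (PresentedGroup (GnmpRels n m p hn)) ∧
    Subgroup.closure {(PresentedGroup.of ⟨2, by omega⟩ :
          PresentedGroup (GnmpRels n m p hn)) ^ p} ⊓
        commutator (PresentedGroup (GnmpRels n m p hn)) = ⊥ ∧
    commutator (PresentedGroup (GnmpRels n m p hn)) ≤
      Subgroup.center (PresentedGroup (GnmpRels n m p hn)) ∧
    commutator (PresentedGroup (GnmpRels n m p hn)) ≠ ⊥ := by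
  refine ⟨?_, ?_, ?_, ?_⟩
  · refine le_antisymm (Gnmp.center_le n m p hn hm hp) (sup_le ?_ ?_)
    · rw [Subgroup.closure_le]
      intro y hy
      rw [Set.mem_singleton_iff] at hy
      subst hy
      exact Gnmp.central_pow n m p hn 2 le_rfl (by omega)
    · exact Gnmp.commutator_le_center n m p hn
  · exact Gnmp.claim2 n m p hn hm hp
  · exact Gnmp.commutator_le_center n m p hn
  · exact Gnmp.claim4 n m p hn hm hp
end

section
/- If G is a group with Z(G) ⊆ G', then any two central automorphisms of G commute. -/
open scoped commutatorElement in
/-- A central automorphism fixes every commutator, hence the commutator subgroup. -/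
lemma central_aut_fixes_commutator {G : Type*} [Group G] (φ : G ≃* G)
    (hφ : ∀ g : G, g⁻¹ * φ g ∈ Subgroup.center G) :
    ∀ x ∈ commutator G, φ x = x := by
  have hcomm : ∀ a b : G, φ ⁅a, b⁆ = ⁅a, b⁆ := by
    intro a b
    have ha := Subgroup.mem_center_iff.mp (hφ a)
    have hb := Subgroup.mem_center_iff.mp (hφ b)
    have hxa : φ a = a * (a⁻¹ * φ a) := by group
    have hxb : φ b = b * (b⁻¹ * φ b) := by group
    simp only [commutatorElement_def, map_mul, map_inv]
    calc φ a * φ b * (φ a)⁻¹ * (φ b)⁻¹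
        = φ a * (φ b * (a⁻¹ * φ a)⁻¹) * a⁻¹ * (φ b)⁻¹ := by group
      _ = φ a * ((a⁻¹ * φ a)⁻¹ * φ b) * a⁻¹ * (φ b)⁻¹ := by
          rw [(Commute.inv_right (ha (φ b)) : _)]
      _ = a * φ b * a⁻¹ * (φ b)⁻¹ := by group
      _ = a * (b * (b⁻¹ * φ b)) * a⁻¹ * (b * (b⁻¹ * φ b))⁻¹ := by rw [← hxb]
      _ = a * b * ((b⁻¹ * φ b) * a⁻¹) * (b⁻¹ * φ b)⁻¹ * b⁻¹ := by group
      _ = a * b * (a⁻¹ * (b⁻¹ * φ b)) * (b⁻¹ * φ b)⁻¹ * b⁻¹ := by rw [hb a⁻¹]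
      _ = a * b * a⁻¹ * b⁻¹ := by group
  intro x hx
  rw [commutator_def, Subgroup.commutator_def] at hx
  induction hx using Subgroup.closure_induction with
  | mem g hg =>
      obtain ⟨p, -, q, -, rfl⟩ := hg
      exact hcomm p q
  | one => simp
  | mul a b _ _ iha ihb => simp [map_mul, iha, ihb]
  | inv a _ iha => simp [map_inv, iha]

/-- If `Z(G) ⊆ G'`, then any two central automorphisms of `G` commute. -/
theorem central_auts_commute_of_center_le_commutator (G : Type*) [Group G]
    (h : Subgroup.center G ≤ commutator G) (φ ψ : G ≃* G)
    (hφ : ∀ g : G, g⁻¹ * φ g ∈ Subgroup.center G)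
    (hψ : ∀ g : G, g⁻¹ * ψ g ∈ Subgroup.center G) :
    ∀ g : G, φ (ψ g) = ψ (φ g) := by
  intro g
  have hz : φ (g⁻¹ * ψ g) = g⁻¹ * ψ g :=
    central_aut_fixes_commutator φ hφ _ (h (hψ g))
  have hw : ψ (g⁻¹ * φ g) = g⁻¹ * φ g :=
    central_aut_fixes_commutator ψ hψ _ (h (hφ g))
  have hz' := Subgroup.mem_center_iff.mp (hψ g)
  have e1 : φ (ψ g) = φ g * (g⁻¹ * ψ g) := by
    have : ψ g = g * (g⁻¹ * ψ g) := by group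
    rw [this, map_mul, hz]; group
  have e2 : ψ (φ g) = ψ g * (g⁻¹ * φ g) := by
    have : φ g = g * (g⁻¹ * φ g) := by group
    rw [this, map_mul, hw]; group
  rw [e1, e2]
  calc φ g * (g⁻¹ * ψ g) = g * ((g⁻¹ * φ g) * (g⁻¹ * ψ g)) := by group
    _ = g * ((g⁻¹ * ψ g) * (g⁻¹ * φ g)) := by rw [hz' (g⁻¹ * φ g)]
    _ = ψ g * (g⁻¹ * φ g) := by group
end
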